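/- arXiv:1605.00058 — 4 statements merged into one kernel-verified Lean document; each statement's English description precedes it below -/
import Mathlib

section
/- Let G be a finite loopless multigraph in which every vertex has even degree at least 2, and let n ≥ 1. Call a labeling σ : E(G) → [n] even if for every label i ∈ [n], the edge set σ^{−1}(i) induces a subgraph of G in which every vertex has even degree. Let E_⊕(G) denote the number of vertex pairs {a,b} joined by an odd number of parallel edges. Then the number of even labelings is at most (2|E(G)| − 2|V(G)|)! · n^{|E(G)|/2 − |E_⊕(G)|/6}. -/
set_option linter.unusedSectionVars false

open Finset

/-- A labeling `σ : E → [n]` of the edges of a multigraph is *even* if for every label `i`,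
the edges carrying label `i` induce a subgraph in which every vertex has even degree. -/
abbrev IsEvenLabeling {V E : Type*} [Fintype V] [DecidableEq V] [Fintype E] [DecidableEq E]
    (ends : E → Sym2 V) (n : ℕ) (σ : E → Fin n) : Prop :=
  ∀ (i : Fin n) (v : V),
    Even ((Finset.univ.filter (fun e => σ e = i ∧ v ∈ ends e)).card)

namespace EvenLabelAux

/-- A finset admitting a fixed-point-free involution has even cardinality. -/
theorem even_card_of_invol {α : Type*} [DecidableEq α] (f : α → α) :
    ∀ s : Finset α, (∀ a ∈ s, f a ∈ s) → (∀ a ∈ s, f a ≠ a) → (∀ a ∈ s, f (f a) = a) →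
      Even s.card := by
  intro s
  induction s using Finset.strongInductionOn with
  | _ s ih =>
    intro h1 h2 h3
    rcases s.eq_empty_or_nonempty with rfl | ⟨a, ha⟩
    · simp
    · have hfa : f a ∈ s := h1 a ha
      have hne : f a ≠ a := h2 a ha
      set t : Finset α := (s.erase a).erase (f a) with ht
      have hts : t ⊆ s := (Finset.erase_subset _ _).trans (Finset.erase_subset _ _)
      have hass : a ∉ t := fun hmem =>
        Finset.notMem_erase a s ((Finset.erase_subset _ _) hmem)
      have htss : t ⊂ s := Finset.ssubset_iff_of_subset hts |>.mpr ⟨a, ha, hass⟩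
      have hmem_t : ∀ b, b ∈ t ↔ b ∈ s ∧ b ≠ a ∧ b ≠ f a := by
        intro b
        simp only [ht, Finset.mem_erase]
        tauto
      have hcard : s.card = t.card + 2 := by
        have h1' : (s.erase a).card = s.card - 1 := Finset.card_erase_of_mem ha
        have h2' : t.card = (s.erase a).card - 1 :=
          Finset.card_erase_of_mem (Finset.mem_erase.mpr ⟨hne, hfa⟩)
        have h3' : 2 ≤ s.card := Finset.one_lt_card.mpr ⟨a, ha, f a, hfa, hne.symm⟩
        omega
      have hteven : Even t.card := by
        refine ih t htss ?_ ?_ ?_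
        · intro b hb
          obtain ⟨hbs, hba, hbfa⟩ := (hmem_t b).mp hb
          refine (hmem_t (f b)).mpr ⟨h1 b hbs, ?_, ?_⟩
          · intro h; exact hbfa (by rw [← h3 b hbs, h])
          · intro h
            have := congrArg f h
            rw [h3 b hbs, h3 a ha] at this
            exact hba this
        · intro b hb; exact h2 b (hts hb)
        · intro b hb; exact h3 b (hts hb)
      rw [hcard]
      exact hteven.add even_two

lemma exists_mem_sym2 {α : Type*} (s : Sym2 α) : ∃ a, a ∈ s := by
  induction s using Sym2.ind with
  | _ a b => exact ⟨a, Sym2.mem_mk_left a b⟩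

variable {V E : Type*} [Fintype V] [DecidableEq V] [Fintype E] [DecidableEq E]
variable (ends : E → Sym2 V)

/-- degree of a vertex -/
def mdeg (v : V) : ℕ := (univ.filter fun e => v ∈ ends e).card

/-- generating relation: two edges sharing a vertex of degree 2 -/
def mrel (e f : E) : Prop := e = f ∨ ∃ v, mdeg ends v = 2 ∧ v ∈ ends e ∧ v ∈ ends f

/-- the setoid generated -/
def mset : Setoid E := ⟨Relation.EqvGen (mrel ends), Relation.EqvGen.is_equivalence _⟩

noncomputable instance : Fintype (Quotient (mset ends)) :=
  @Quotient.fintype _ _ (mset ends) (fun _ _ => Classical.propDecidable _)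

/-- the class of a quotient element, as a finset -/
noncomputable def cls (c : Quotient (mset ends)) : Finset E :=
  @Finset.filter _ (fun e => Quotient.mk (mset ends) e = c)
    (fun _ => Classical.propDecidable _) univ

/-- a class is closed if all its incident vertices have degree 2 -/
def IsClosed (c : Quotient (mset ends)) : Prop :=
  ∀ e ∈ cls ends c, ∀ v, v ∈ ends e → mdeg ends v = 2

/-- the parallel class of a pair -/
def pairF (s : Sym2 V) : Finset E := univ.filter fun e => ends e = s

/-- pairs joined by an odd number of edges -/
def oddPairs : Finset (Sym2 V) := univ.filter fun s => Odd (pairF ends s).card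

lemma card_filter_mem (hloop : ∀ e, ¬ (ends e).IsDiag) (e : E) :
    (univ.filter fun v => v ∈ ends e).card = 2 := by
  obtain ⟨⟨a, b⟩, hp⟩ := Quot.exists_rep (ends e)
  have hE : ends e = s(a, b) := by rw [← hp]
  have hab : a ≠ b := by
    intro h; exact hloop e (by rw [hE]; exact Sym2.mk_isDiag_iff.mpr h)
  have h : (univ.filter fun v => v ∈ ends e) = {a, b} := by
    ext v
    simp [hE, Sym2.mem_iff]
  rw [h, Finset.card_insert_of_notMem (by simp [hab]), Finset.card_singleton]

lemma handshake (hloop : ∀ e, ¬ (ends e).IsDiag) (A : Finset E) :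
    ∑ v : V, (A.filter fun e => v ∈ ends e).card = 2 * A.card := by
  have h1 : ∀ v : V, (A.filter fun e => v ∈ ends e).card
      = ∑ e ∈ A, if v ∈ ends e then 1 else 0 := by
    intro v; rw [Finset.card_filter]
  calc ∑ v : V, (A.filter fun e => v ∈ ends e).card
      = ∑ v : V, ∑ e ∈ A, if v ∈ ends e then 1 else 0 := by simp_rw [h1]
    _ = ∑ e ∈ A, ∑ v : V, if v ∈ ends e then 1 else 0 := Finset.sum_comm
    _ = ∑ e ∈ A, (univ.filter fun v => v ∈ ends e).card := by
        refine Finset.sum_congr rfl fun e _ => ?_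
        rw [Finset.card_filter]
    _ = ∑ e ∈ A, 2 := Finset.sum_congr rfl fun e _ => card_filter_mem ends hloop e
    _ = 2 * A.card := by rw [Finset.sum_const, smul_eq_mul, mul_comm]

/-- at a degree-2 vertex, the incident edges are exactly a given pair -/
lemma filter_eq_pair {v : V} {e f : E} (h2 : mdeg ends v = 2) (he : v ∈ ends e)
    (hf : v ∈ ends f) (hef : e ≠ f) :
    univ.filter (fun g => v ∈ ends g) = {e, f} := by
  symm
  apply Finset.eq_of_subset_of_card_le
  · intro g hg
    simp only [Finset.mem_insert, Finset.mem_singleton] at hg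
    rcases hg with rfl | rfl <;> simp [he, hf]
  · have h2' : (univ.filter (fun g => v ∈ ends g)).card = 2 := h2
    rw [h2', Finset.card_insert_of_notMem (by simp [hef]), Finset.card_singleton]

/-- a degree-2 vertex has a second incident edge -/
lemma exists_second_edge {v : V} {e : E} (h2 : mdeg ends v = 2) (he : v ∈ ends e) :
    ∃ f, f ≠ e ∧ v ∈ ends f := by
  have h2' : (univ.filter fun g => v ∈ ends g).card = 2 := h2
  have h1 : 1 < (univ.filter fun g => v ∈ ends g).card := by omega
  obtain ⟨a, ha, b, hb, hab⟩ := Finset.one_lt_card.mp h1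
  simp only [Finset.mem_filter, Finset.mem_univ, true_and] at ha hb
  by_cases hae : a = e
  · exact ⟨b, by rw [← hae]; exact hab.symm, hb⟩
  · exact ⟨a, hae, ha⟩


/-- labels agree across a degree-2 vertex -/
lemma label_eq_of_deg2 {n : ℕ} {σ : E → Fin n} (hσ : IsEvenLabeling ends n σ) {v : V} {e f : E}
    (h2 : mdeg ends v = 2) (he : v ∈ ends e) (hf : v ∈ ends f) : σ e = σ f := by
  by_cases hef : e = f
  · rw [hef]
  · have hA : Even ((univ.filter (fun g => σ g = σ e ∧ v ∈ ends g)).card) := hσ (σ e) v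
    set A := univ.filter (fun g => σ g = σ e ∧ v ∈ ends g) with hA'
    have heA : e ∈ A := by simp [hA', he]
    have hsub : A ⊆ {e, f} := by
      intro g hg
      simp only [hA', Finset.mem_filter] at hg
      have hmem : g ∈ univ.filter (fun g => v ∈ ends g) := by simp [hg.2.2]
      rwa [filter_eq_pair ends h2 he hf hef] at hmem
    have hcard2 : ({e, f} : Finset E).card = 2 := by
      rw [Finset.card_insert_of_notMem (by simp [hef]), Finset.card_singleton]
    have hAcard : A.card = 2 := by
      have hle : A.card ≤ 2 := hcard2 ▸ Finset.card_le_card hsub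
      have hpos : 0 < A.card := Finset.card_pos.mpr ⟨e, heA⟩
      obtain ⟨k, hk⟩ := hA
      omega
    have hAe : A = {e, f} := Finset.eq_of_subset_of_card_le hsub (by omega)
    have hfA : f ∈ A := by rw [hAe]; simp
    simp only [hA', Finset.mem_filter] at hfA
    exact hfA.2.1.symm

/-- an even labeling is constant on classes -/
lemma sigma_const {n : ℕ} {σ : E → Fin n} (hσ : IsEvenLabeling ends n σ) {e f : E}
    (h : Quotient.mk (mset ends) e = Quotient.mk (mset ends) f) : σ e = σ f := by
  have h' : Relation.EqvGen (mrel ends) e f := Quotient.exact h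
  clear h
  induction h' with
  | rel a b hab =>
    rcases hab with rfl | ⟨v, h2, ha, hb⟩
    · rfl
    · exact label_eq_of_deg2 ends hσ h2 ha hb
  | refl a => rfl
  | symm a b _ ih => exact ih.symm
  | trans a b c _ _ ih1 ih2 => exact ih1.trans ih2

lemma mem_cls {e : E} {c : Quotient (mset ends)} :
    e ∈ cls ends c ↔ Quotient.mk (mset ends) e = c := by
  simp [cls]

lemma quot_eq_of_deg2 {v : V} {e f : E} (h2 : mdeg ends v = 2) (he : v ∈ ends e)
    (hf : v ∈ ends f) : Quotient.mk (mset ends) e = Quotient.mk (mset ends) f :=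
  Quotient.sound (Relation.EqvGen.rel _ _ (Or.inr ⟨v, h2, he, hf⟩))

lemma cls_absorb {c : Quotient (mset ends)} (hc : IsClosed ends c) {e f : E} {v : V}
    (he : e ∈ cls ends c) (hv : v ∈ ends e) (hvf : v ∈ ends f) : f ∈ cls ends c := by
  have h2 := hc e he v hv
  rw [mem_cls] at he ⊢
  rw [quot_eq_of_deg2 ends h2 hvf hv, he]

lemma cls_nonempty (c : Quotient (mset ends)) : (cls ends c).Nonempty := by
  obtain ⟨e, he⟩ := Quotient.exists_rep c
  exact ⟨e, (mem_cls ends).mpr he⟩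

lemma two_le_card_cls_of_closed {c : Quotient (mset ends)} (hc : IsClosed ends c) :
    2 ≤ (cls ends c).card := by
  obtain ⟨e, he⟩ := cls_nonempty ends c
  obtain ⟨v, hv⟩ := exists_mem_sym2 (ends e)
  have h2 := hc e he v hv
  obtain ⟨f, hfe, hvf⟩ := exists_second_edge ends h2 hv
  exact Finset.one_lt_card.mpr ⟨e, he, f, cls_absorb ends hc he hv hvf, hfe.symm⟩

/-- if every vertex of `e` lies in `ends f` then the two edges are parallel -/
lemma ends_eq_of_forall_mem (hloop : ∀ e, ¬ (ends e).IsDiag) {e f : E}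
    (h : ∀ v, v ∈ ends e → v ∈ ends f) : ends f = ends e := by
  obtain ⟨⟨a, b⟩, hp⟩ := Quot.exists_rep (ends e)
  have hE : ends e = s(a, b) := by rw [← hp]
  have hab : a ≠ b := fun hh => hloop e (by rw [hE]; exact Sym2.mk_isDiag_iff.mpr hh)
  have ha : a ∈ ends f := h a (by rw [hE]; exact Sym2.mem_mk_left a b)
  have hb : b ∈ ends f := h b (by rw [hE]; exact Sym2.mem_mk_right a b)
  rw [hE]
  exact (Sym2.mem_and_mem_iff hab).mp ⟨ha, hb⟩

/-- a closed class with exactly two edges is a parallel pair -/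
lemma closed_pair (hloop : ∀ e, ¬ (ends e).IsDiag) {c : Quotient (mset ends)}
    (hc : IsClosed ends c) {e f : E} (hcls : cls ends c = {e, f}) (hef : e ≠ f) :
    ends f = ends e := by
  have he : e ∈ cls ends c := by rw [hcls]; simp
  refine ends_eq_of_forall_mem ends hloop ?_
  intro v hv
  have h2 := hc e he v hv
  obtain ⟨g, hge, hvg⟩ := exists_second_edge ends h2 hv
  have hg : g ∈ cls ends c := cls_absorb ends hc he hv hvg
  rw [hcls] at hg
  simp only [Finset.mem_insert, Finset.mem_singleton] at hg
  rcases hg with rfl | rfl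
  · exact absurd rfl hge
  · exact hvg

noncomputable def openCls : Finset (Quotient (mset ends)) :=
  @Finset.filter _ (fun c => ¬ IsClosed ends c) (fun _ => Classical.propDecidable _) univ

noncomputable def closedCls : Finset (Quotient (mset ends)) :=
  @Finset.filter _ (fun c => IsClosed ends c) (fun _ => Classical.propDecidable _) univ

noncomputable def openE : Finset E :=
  @Finset.filter _ (fun e => ¬ IsClosed ends (Quotient.mk (mset ends) e))
    (fun _ => Classical.propDecidable _) univ

noncomputable def closedE : Finset E :=
  @Finset.filter _ (fun e => IsClosed ends (Quotient.mk (mset ends) e))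
    (fun _ => Classical.propDecidable _) univ

noncomputable def oddClosed : Finset (Sym2 V) :=
  @Finset.filter _ (fun s => ∃ e, ends e = s ∧ IsClosed ends (Quotient.mk (mset ends) e))
    (fun _ => Classical.propDecidable _) (oddPairs ends)

noncomputable def oddOpen : Finset (Sym2 V) :=
  @Finset.filter _ (fun s => ¬ ∃ e, ends e = s ∧ IsClosed ends (Quotient.mk (mset ends) e))
    (fun _ => Classical.propDecidable _) (oddPairs ends)

lemma mem_openCls {c : Quotient (mset ends)} : c ∈ openCls ends ↔ ¬ IsClosed ends c := by
  simp [openCls]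

lemma mem_closedCls {c : Quotient (mset ends)} : c ∈ closedCls ends ↔ IsClosed ends c := by
  simp [closedCls]

lemma mem_openE {e : E} : e ∈ openE ends ↔ ¬ IsClosed ends (Quotient.mk (mset ends) e) := by
  simp [openE]

lemma mem_closedE {e : E} : e ∈ closedE ends ↔ IsClosed ends (Quotient.mk (mset ends) e) := by
  simp [closedE]

lemma mem_oddClosed {s : Sym2 V} : s ∈ oddClosed ends ↔ s ∈ oddPairs ends ∧
    ∃ e, ends e = s ∧ IsClosed ends (Quotient.mk (mset ends) e) := by
  simp [oddClosed, Finset.mem_filter]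

lemma mem_oddOpen {s : Sym2 V} : s ∈ oddOpen ends ↔ s ∈ oddPairs ends ∧
    ¬ ∃ e, ends e = s ∧ IsClosed ends (Quotient.mk (mset ends) e) := by
  simp [oddOpen, Finset.mem_filter]

def Wset : Finset V := univ.filter (fun v => mdeg ends v ≠ 2)

noncomputable def dC (c : Quotient (mset ends)) (v : V) : ℕ :=
  ((cls ends c).filter fun e => v ∈ ends e).card

noncomputable def bC (c : Quotient (mset ends)) : ℕ := ∑ v ∈ Wset ends, dC ends c v

lemma open_classes_card_le (hloop : ∀ e, ¬ (ends e).IsDiag)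
    (hdeg : ∀ v : V, Even (mdeg ends v) ∧ 2 ≤ mdeg ends v) :
    (openCls ends).card + 2 * Fintype.card V ≤ 2 * Fintype.card E := by
  classical
  -- each class has even "boundary"
  have ha4 : ∀ (c : Quotient (mset ends)) (v : V), mdeg ends v = 2 → Even (dC ends c v) := by
    intro c v h2
    by_cases hex : ∃ e ∈ cls ends c, v ∈ ends e
    · obtain ⟨e, he, hv⟩ := hex
      have heq : (cls ends c).filter (fun e => v ∈ ends e)
          = univ.filter (fun g => v ∈ ends g) := by
        apply Finset.Subset.antisymm
        · intro g hg
          simp only [Finset.mem_filter] at hg ⊢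
          exact ⟨Finset.mem_univ g, hg.2⟩
        · intro g hg
          simp only [Finset.mem_filter] at hg ⊢
          refine ⟨?_, hg.2⟩
          rw [mem_cls] at he ⊢
          rw [quot_eq_of_deg2 ends h2 hg.2 hv, he]
      have hcc : (univ.filter (fun g => v ∈ ends g)).card = 2 := h2
      unfold dC
      rw [heq, hcc]
      exact even_two
    · have hempty : (cls ends c).filter (fun e => v ∈ ends e) = ∅ := by
        rw [Finset.filter_eq_empty_iff]
        intro g hg hvg
        exact hex ⟨g, hg, hvg⟩
      unfold dC
      rw [hempty]
      simp
  have ha5 : ∀ c, Even (bC ends c) := by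
    intro c
    have hsplit := Finset.sum_filter_add_sum_filter_not (univ : Finset V)
      (fun v => mdeg ends v ≠ 2) (dC ends c)
    have htot : ∑ v : V, dC ends c v = 2 * (cls ends c).card := by
      unfold dC
      exact handshake ends hloop (cls ends c)
    have heven2 : Even (∑ v ∈ univ.filter (fun v => ¬ mdeg ends v ≠ 2), dC ends c v) := by
      refine Finset.even_sum _ fun v hv => ?_
      simp only [Finset.mem_filter, not_not] at hv
      exact ha4 c v hv.2
    have hkey : Even (bC ends c
        + ∑ v ∈ univ.filter (fun v => ¬ mdeg ends v ≠ 2), dC ends c v) := by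
      unfold bC Wset
      rw [hsplit, htot]
      exact even_two_mul _
    exact (Nat.even_add.mp hkey).mpr heven2
  have ha6 : ∀ c ∈ openCls ends, 2 ≤ bC ends c := by
    intro c hc
    have hno : ¬ IsClosed ends c := (mem_openCls ends).mp hc
    rw [IsClosed] at hno
    push_neg at hno
    obtain ⟨e, he, v, hv, hnd⟩ := hno
    have hvW : v ∈ Wset ends := by unfold Wset; simp [hnd]
    have h1d : 1 ≤ dC ends c v := Finset.card_pos.mpr ⟨e, Finset.mem_filter.mpr ⟨he, hv⟩⟩
    have h1b : 1 ≤ bC ends c :=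
      le_trans h1d (Finset.single_le_sum (fun _ _ => Nat.zero_le _) hvW)
    obtain ⟨k, hk⟩ := ha5 c
    omega
  have ha7 : ∑ c : Quotient (mset ends), bC ends c = ∑ v ∈ Wset ends, mdeg ends v := by
    unfold bC
    rw [Finset.sum_comm]
    refine Finset.sum_congr rfl fun v _ => ?_
    have hfib := Finset.card_eq_sum_card_fiberwise
      (f := fun e => Quotient.mk (mset ends) e) (s := univ.filter fun e => v ∈ ends e)
      (t := univ) (fun e _ => Finset.mem_univ _)
    have hmd : mdeg ends v = ∑ c : Quotient (mset ends),
        ((univ.filter fun e => v ∈ ends e).filter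
          (fun e => Quotient.mk (mset ends) e = c)).card := hfib
    rw [hmd]
    refine Finset.sum_congr rfl fun c _ => ?_
    have hset : ((univ.filter fun e => v ∈ ends e).filter
        (fun e => Quotient.mk (mset ends) e = c)) = (cls ends c).filter fun e => v ∈ ends e := by
      ext g
      simp only [Finset.mem_filter, Finset.mem_univ, true_and]
      rw [mem_cls]
      tauto
    rw [hset]
    rfl
  have ha8 : 2 * (openCls ends).card ≤ ∑ v ∈ Wset ends, mdeg ends v := by
    calc 2 * (openCls ends).card = (openCls ends).card • 2 := by
          rw [smul_eq_mul, mul_comm]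
      _ ≤ ∑ c ∈ openCls ends, bC ends c := Finset.card_nsmul_le_sum _ _ _ ha6
      _ ≤ ∑ c : Quotient (mset ends), bC ends c :=
          Finset.sum_le_sum_of_subset (fun c _ => Finset.mem_univ c)
      _ = ∑ v ∈ Wset ends, mdeg ends v := ha7
  have ha9 : 4 * (Wset ends).card ≤ ∑ v ∈ Wset ends, mdeg ends v := by
    calc 4 * (Wset ends).card = (Wset ends).card • 4 := by rw [smul_eq_mul, mul_comm]
      _ ≤ ∑ v ∈ Wset ends, mdeg ends v := by
          refine Finset.card_nsmul_le_sum _ _ _ fun v hv => ?_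
          obtain ⟨k, hk⟩ := (hdeg v).1
          have h2 := (hdeg v).2
          have hne : mdeg ends v ≠ 2 := by
            have : v ∈ univ.filter (fun v => mdeg ends v ≠ 2) := hv
            simp only [Finset.mem_filter] at this
            exact this.2
          omega
  have ha10 : ∑ v ∈ Wset ends, mdeg ends v
      + ∑ v ∈ univ.filter (fun v => ¬ mdeg ends v ≠ 2), mdeg ends v
      = 2 * Fintype.card E := by
    have hsum := Finset.sum_filter_add_sum_filter_not (univ : Finset V)
      (fun v => mdeg ends v ≠ 2) (mdeg ends)
    have hhand : ∑ v : V, mdeg ends v = 2 * Fintype.card E := by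
      have := handshake ends hloop (univ : Finset E)
      rw [Finset.card_univ] at this
      exact this
    rw [← hhand, ← hsum]
    rfl
  have ha10b : ∑ v ∈ univ.filter (fun v => ¬ mdeg ends v ≠ 2), mdeg ends v
      = 2 * (univ.filter (fun v => ¬ mdeg ends v ≠ 2)).card := by
    rw [Finset.sum_congr rfl (fun v hv => ?_), Finset.sum_const, smul_eq_mul, mul_comm]
    simp only [Finset.mem_filter, not_not] at hv
    exact hv.2
  have ha11 : (Wset ends).card + (univ.filter (fun v => ¬ mdeg ends v ≠ 2)).card
      = Fintype.card V := by
    have := Finset.card_filter_add_card_filter_not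
      (s := (univ : Finset V)) (p := fun v => mdeg ends v ≠ 2)
    rw [Finset.card_univ] at this
    exact this
  omega

lemma closed_bound (hloop : ∀ e, ¬ (ends e).IsDiag) :
    6 * (closedCls ends).card + (oddClosed ends).card ≤ 3 * (closedE ends).card := by
  classical
  rcases isEmpty_or_nonempty E with hE | hE
  · have h1 : oddClosed ends = ∅ := by
      rw [Finset.eq_empty_iff_forall_notMem]
      intro s hs
      obtain ⟨e, -⟩ := ((mem_oddClosed ends).mp hs).2
      exact hE.elim e
    have h2 : closedCls ends = ∅ := by
      rw [Finset.eq_empty_iff_forall_notMem]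
      intro c _
      obtain ⟨e, -⟩ := Quotient.exists_rep c
      exact hE.elim e
    rw [h1, h2]
    simp
  · set ψ : Sym2 V → Quotient (mset ends) := fun s =>
      if h : ∃ e, ends e = s ∧ IsClosed ends (Quotient.mk (mset ends) e) then
        Quotient.mk (mset ends) h.choose
      else Quotient.mk (mset ends) (Classical.arbitrary E) with hψdef
    have hψ : ∀ s ∈ oddClosed ends, ψ s ∈ closedCls ends ∧
        (∀ f, ends f = s → f ∈ cls ends (ψ s)) := by
      intro s hs
      obtain ⟨hs1, h⟩ := (mem_oddClosed ends).mp hs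
      have hch := h.choose_spec
      have hψs : ψ s = Quotient.mk (mset ends) h.choose := by rw [hψdef]; exact dif_pos h
      constructor
      · rw [hψs]
        exact (mem_closedCls ends).mpr hch.2
      · intro f hf
        obtain ⟨v, hv⟩ := exists_mem_sym2 (ends h.choose)
        have hvf : v ∈ ends f := by rw [hf, ← hch.1]; exact hv
        rw [hψs]
        exact cls_absorb ends hch.2 ((mem_cls ends).mpr rfl) hv hvf
    have hfibsum : (oddClosed ends).card
        = ∑ c ∈ closedCls ends, ((oddClosed ends).filter (fun s => ψ s = c)).card :=
      Finset.card_eq_sum_card_fiberwise (fun s hs => (hψ s hs).1)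
    have hEsum : (closedE ends).card = ∑ c ∈ closedCls ends, (cls ends c).card := by
      have h1 : (closedE ends).card = ∑ c ∈ closedCls ends,
          ((closedE ends).filter (fun e => Quotient.mk (mset ends) e = c)).card :=
        Finset.card_eq_sum_card_fiberwise (fun e he =>
          (mem_closedCls ends).mpr ((mem_closedE ends).mp he))
      rw [h1]
      refine Finset.sum_congr rfl fun c hc => ?_
      congr 1
      ext g
      rw [Finset.mem_filter, mem_closedE, mem_cls]
      constructor
      · rintro ⟨_, h2⟩; exact h2
      · intro h2
        refine ⟨?_, h2⟩
        rw [h2]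
        exact (mem_closedCls ends).mp hc
    have hper : ∀ c ∈ closedCls ends,
        6 + ((oddClosed ends).filter (fun s => ψ s = c)).card ≤ 3 * (cls ends c).card := by
      intro c hc
      have hcl : IsClosed ends c := (mem_closedCls ends).mp hc
      have h2 : 2 ≤ (cls ends c).card := two_le_card_cls_of_closed ends hcl
      by_cases hc2 : (cls ends c).card = 2
      · have hfib : (oddClosed ends).filter (fun s => ψ s = c) = ∅ := by
          rw [Finset.eq_empty_iff_forall_notMem]
          intro s hs
          obtain ⟨hs1, hs2⟩ := Finset.mem_filter.mp hs
          have hsub : ∀ f, ends f = s → f ∈ cls ends c := by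
            intro f hf
            have := (hψ s hs1).2 f hf
            rwa [hs2] at this
          obtain ⟨e, f, hef, hpair⟩ := Finset.card_eq_two.mp hc2
          have hff : ends f = ends e := closed_pair ends hloop hcl hpair hef
          have hodd : Odd (pairF ends s).card := by
            have hmem : s ∈ oddPairs ends := ((mem_oddClosed ends).mp hs1).1
            have := Finset.mem_filter.mp hmem
            exact this.2
          have hne : (pairF ends s).Nonempty := by
            rcases Finset.eq_empty_or_nonempty (pairF ends s) with hh | hh
            · rw [hh] at hodd; simp at hodd
            · exact hh
          obtain ⟨g, hg⟩ := hne
          have hgs : ends g = s := (Finset.mem_filter.mp hg).2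
          have hgc : g ∈ cls ends c := hsub g hgs
          rw [hpair] at hgc
          have hse : s = ends e := by
            simp only [Finset.mem_insert, Finset.mem_singleton] at hgc
            rcases hgc with rfl | rfl
            · exact hgs.symm
            · rw [← hgs, hff]
          have hpf : pairF ends s = {e, f} := by
            apply Finset.Subset.antisymm
            · intro g' hg'
              have := hsub g' (Finset.mem_filter.mp hg').2
              rwa [hpair] at this
            · intro g' hg'
              simp only [Finset.mem_insert, Finset.mem_singleton] at hg'
              rcases hg' with rfl | rfl
              · simp [pairF, hse.symm]
              · simp only [pairF, Finset.mem_filter, Finset.mem_univ, true_and]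
                rw [hff, ← hse]
          rw [hpf, Finset.card_insert_of_notMem (by simp [hef]),
            Finset.card_singleton] at hodd
          rcases hodd with ⟨k, hk⟩
          omega
        rw [hfib]
        simp only [Finset.card_empty, Nat.add_zero]
        omega
      · have h3 : 3 ≤ (cls ends c).card := by omega
        have hinj : ((oddClosed ends).filter (fun s => ψ s = c)).card ≤ (cls ends c).card := by
          refine Finset.card_le_card_of_injOn
            (fun s => if h : (pairF ends s).Nonempty then h.choose else Classical.arbitrary E)
            ?_ ?_
          · intro s hs
            obtain ⟨hs1, hs2⟩ := Finset.mem_filter.mp hs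
            have hodd : Odd (pairF ends s).card :=
              (Finset.mem_filter.mp ((mem_oddClosed ends).mp hs1).1).2
            have hne : (pairF ends s).Nonempty := by
              rcases Finset.eq_empty_or_nonempty (pairF ends s) with hh | hh
              · rw [hh] at hodd; simp at hodd
              · exact hh
            simp only [dif_pos hne]
            have hgs : ends hne.choose = s := (Finset.mem_filter.mp hne.choose_spec).2
            have := (hψ s hs1).2 hne.choose hgs
            rwa [hs2] at this
          · intro s hs t ht hst
            obtain ⟨hs1, -⟩ := Finset.mem_filter.mp hs
            obtain ⟨ht1, -⟩ := Finset.mem_filter.mp ht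
            have hodds : Odd (pairF ends s).card :=
              (Finset.mem_filter.mp ((mem_oddClosed ends).mp hs1).1).2
            have hoddt : Odd (pairF ends t).card :=
              (Finset.mem_filter.mp ((mem_oddClosed ends).mp ht1).1).2
            have hnes : (pairF ends s).Nonempty := by
              rcases Finset.eq_empty_or_nonempty (pairF ends s) with hh | hh
              · rw [hh] at hodds; simp at hodds
              · exact hh
            have hnet : (pairF ends t).Nonempty := by
              rcases Finset.eq_empty_or_nonempty (pairF ends t) with hh | hh
              · rw [hh] at hoddt; simp at hoddt
              · exact hh
            simp only [dif_pos hnes, dif_pos hnet] at hst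
            have h1 : ends hnes.choose = s := (Finset.mem_filter.mp hnes.choose_spec).2
            have h2' : ends hnet.choose = t := (Finset.mem_filter.mp hnet.choose_spec).2
            rw [← h1, ← h2', hst]
        omega
    calc 6 * (closedCls ends).card + (oddClosed ends).card
        = ∑ c ∈ closedCls ends, (6 + ((oddClosed ends).filter (fun s => ψ s = c)).card) := by
          rw [Finset.sum_add_distrib, Finset.sum_const, ← hfibsum, smul_eq_mul, mul_comm]
      _ ≤ ∑ c ∈ closedCls ends, 3 * (cls ends c).card := Finset.sum_le_sum hper
      _ = 3 * (closedE ends).card := by rw [← Finset.mul_sum, ← hEsum]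

lemma oddOpen_card_le : (oddOpen ends).card ≤ (openE ends).card := by
  classical
  rcases isEmpty_or_nonempty E with hE | hE
  · have h1 : oddOpen ends = ∅ := by
      rw [Finset.eq_empty_iff_forall_notMem]
      intro s hs
      have hodd : Odd (pairF ends s).card :=
        (Finset.mem_filter.mp ((mem_oddOpen ends).mp hs).1).2
      have : pairF ends s = ∅ := Finset.eq_empty_of_isEmpty _
      rw [this] at hodd
      simp at hodd
    rw [h1]
    simp
  · refine Finset.card_le_card_of_injOn
      (fun s => if h : (pairF ends s).Nonempty then h.choose else Classical.arbitrary E) ?_ ?_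
    · intro s hs
      obtain ⟨hs1, hs2⟩ := (mem_oddOpen ends).mp hs
      have hodd : Odd (pairF ends s).card := (Finset.mem_filter.mp hs1).2
      have hne : (pairF ends s).Nonempty := by
        rcases Finset.eq_empty_or_nonempty (pairF ends s) with hh | hh
        · rw [hh] at hodd; simp at hodd
        · exact hh
      simp only [dif_pos hne]
      have hgs : ends hne.choose = s := (Finset.mem_filter.mp hne.choose_spec).2
      refine (mem_openE ends).mpr fun hcl => hs2 ⟨hne.choose, hgs, hcl⟩
    · intro s hs t ht hst
      obtain ⟨hs1, -⟩ := (mem_oddOpen ends).mp hs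
      obtain ⟨ht1, -⟩ := (mem_oddOpen ends).mp ht
      have hodds : Odd (pairF ends s).card := (Finset.mem_filter.mp hs1).2
      have hoddt : Odd (pairF ends t).card := (Finset.mem_filter.mp ht1).2
      have hnes : (pairF ends s).Nonempty := by
        rcases Finset.eq_empty_or_nonempty (pairF ends s) with hh | hh
        · rw [hh] at hodds; simp at hodds
        · exact hh
      have hnet : (pairF ends t).Nonempty := by
        rcases Finset.eq_empty_or_nonempty (pairF ends t) with hh | hh
        · rw [hh] at hoddt; simp at hoddt
        · exact hh
      simp only [dif_pos hnes, dif_pos hnet] at hst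
      have h1 : ends hnes.choose = s := (Finset.mem_filter.mp hnes.choose_spec).2
      have h2' : ends hnet.choose = t := (Finset.mem_filter.mp hnet.choose_spec).2
      rw [← h1, ← h2', hst]

lemma open_label_bound (hloop : ∀ e, ¬ (ends e).IsDiag) {n : ℕ} {σ : E → Fin n}
    (hσ : IsEvenLabeling ends n σ) :
    6 * ((openE ends).image σ).card + (oddOpen ends).card ≤ 3 * (openE ends).card := by
  classical
  rcases isEmpty_or_nonempty E with hE | hE
  · have h1 : oddOpen ends = ∅ := by
      rw [Finset.eq_empty_iff_forall_notMem]
      intro s hs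
      have hodd : Odd (pairF ends s).card :=
        (Finset.mem_filter.mp ((mem_oddOpen ends).mp hs).1).2
      have : pairF ends s = ∅ := Finset.eq_empty_of_isEmpty _
      rw [this] at hodd
      simp at hodd
    have h2 : openE ends = ∅ := Finset.eq_empty_of_isEmpty _
    rw [h1, h2]
    simp
  -- absorption at closed classes
  have habs : ∀ (e f : E) (v : V), IsClosed ends (Quotient.mk (mset ends) e) →
      v ∈ ends e → v ∈ ends f → IsClosed ends (Quotient.mk (mset ends) f) := by
    intro e f v hcl hv hvf
    have hmem := cls_absorb ends hcl ((mem_cls ends).mpr rfl) hv hvf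
    rw [mem_cls] at hmem
    rw [hmem]
    exact hcl
  set Fi : Fin n → Finset E := fun i => (openE ends).filter (fun e => σ e = i) with hFidef
  -- open fibers are even at every vertex
  have heven : ∀ (i : Fin n) (v : V), Even (((Fi i).filter (fun e => v ∈ ends e)).card) := by
    intro i v
    by_cases hv : ∃ e, v ∈ ends e ∧ IsClosed ends (Quotient.mk (mset ends) e)
    · have : (Fi i).filter (fun e => v ∈ ends e) = ∅ := by
        rw [Finset.eq_empty_iff_forall_notMem]
        intro g hg
        obtain ⟨hg1, hg2⟩ := Finset.mem_filter.mp hg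
        obtain ⟨hg3, -⟩ := Finset.mem_filter.mp hg1
        obtain ⟨e, hv1, hv2⟩ := hv
        exact (mem_openE ends).mp hg3 (habs e g v hv2 hv1 hg2)
      rw [this]
      simp
    · have heq : (Fi i).filter (fun e => v ∈ ends e)
          = univ.filter (fun e => σ e = i ∧ v ∈ ends e) := by
        ext g
        simp only [hFidef, Finset.mem_filter, Finset.mem_univ, true_and, mem_openE]
        constructor
        · rintro ⟨⟨-, h1⟩, h2⟩; exact ⟨h1, h2⟩
        · rintro ⟨h1, h2⟩
          exact ⟨⟨fun hcl => hv ⟨g, h2, hcl⟩, h1⟩, h2⟩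
      rw [heq]
      exact hσ i v
  -- nonempty open fibers have at least two edges
  have htwo : ∀ i : Fin n, (Fi i).Nonempty → 2 ≤ (Fi i).card := by
    intro i ⟨e, he⟩
    obtain ⟨v, hv⟩ := exists_mem_sym2 (ends e)
    have hA : Even (((Fi i).filter (fun e => v ∈ ends e)).card) := heven i v
    have heA : e ∈ (Fi i).filter (fun e => v ∈ ends e) := Finset.mem_filter.mpr ⟨he, hv⟩
    have hpos : 0 < ((Fi i).filter (fun e => v ∈ ends e)).card := Finset.card_pos.mpr ⟨e, heA⟩
    obtain ⟨k, hk⟩ := hA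
    have hsub : ((Fi i).filter (fun e => v ∈ ends e)).card ≤ (Fi i).card :=
      Finset.card_le_card (Finset.filter_subset _ _)
    omega
  -- open fibers with exactly two edges are parallel pairs
  have hpar : ∀ (i : Fin n) (e f : E), Fi i = {e, f} → e ≠ f → ends f = ends e := by
    intro i e f hpair hef
    refine ends_eq_of_forall_mem ends hloop ?_
    intro v hv
    have hA : Even (((Fi i).filter (fun e => v ∈ ends e)).card) := heven i v
    have heFi : e ∈ Fi i := by rw [hpair]; simp
    have heA : e ∈ (Fi i).filter (fun e => v ∈ ends e) := Finset.mem_filter.mpr ⟨heFi, hv⟩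
    have hsub : (Fi i).filter (fun e => v ∈ ends e) ⊆ {e, f} := by
      rw [← hpair]; exact Finset.filter_subset _ _
    have hcard2 : ({e, f} : Finset E).card = 2 := by
      rw [Finset.card_insert_of_notMem (by simp [hef]), Finset.card_singleton]
    have hle : ((Fi i).filter (fun e => v ∈ ends e)).card ≤ 2 :=
      hcard2 ▸ Finset.card_le_card hsub
    have hpos : 0 < ((Fi i).filter (fun e => v ∈ ends e)).card := Finset.card_pos.mpr ⟨e, heA⟩
    have hAcard : ((Fi i).filter (fun e => v ∈ ends e)).card = 2 := by
      obtain ⟨k, hk⟩ := hA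
      omega
    have hAset : (Fi i).filter (fun e => v ∈ ends e) = {e, f} :=
      Finset.eq_of_subset_of_card_le hsub (by omega)
    have hfA : f ∈ (Fi i).filter (fun e => v ∈ ends e) := by rw [hAset]; simp
    exact (Finset.mem_filter.mp hfA).2
  set bigE : Finset E := (openE ends).filter (fun e => 3 ≤ (Fi (σ e)).card) with hbigdef
  -- every open odd pair has an edge in a big fiber
  have hodd_big : ∀ s ∈ oddOpen ends, ∃ e, ends e = s ∧ e ∈ bigE := by
    intro s hs
    obtain ⟨hs1, hno⟩ := (mem_oddOpen ends).mp hs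
    have hodd : Odd (pairF ends s).card := (Finset.mem_filter.mp hs1).2
    have hopen : ∀ e ∈ pairF ends s, e ∈ openE ends := by
      intro e he
      exact (mem_openE ends).mpr fun hcl => hno ⟨e, (Finset.mem_filter.mp he).2, hcl⟩
    by_contra hcon
    push_neg at hcon
    have hsmall : ∀ e ∈ pairF ends s, (Fi (σ e)).card = 2 := by
      intro e he
      have heo : e ∈ openE ends := hopen e he
      have heFi : e ∈ Fi (σ e) := Finset.mem_filter.mpr ⟨heo, rfl⟩
      have h2 : 2 ≤ (Fi (σ e)).card := htwo _ ⟨e, heFi⟩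
      have hnb : e ∉ bigE := hcon e (Finset.mem_filter.mp he).2
      have : ¬ 3 ≤ (Fi (σ e)).card := by
        intro h3
        exact hnb (Finset.mem_filter.mpr ⟨heo, h3⟩)
      omega
    set j : E → E := fun e =>
      if h : ((Fi (σ e)).erase e).Nonempty then h.choose else e with hjdef
    have hj : ∀ e ∈ pairF ends s, j e ∈ pairF ends s ∧ j e ≠ e ∧ j (j e) = e := by
      intro e he
      have he2 : (Fi (σ e)).card = 2 := hsmall e he
      have heFi : e ∈ Fi (σ e) := Finset.mem_filter.mpr ⟨hopen e he, rfl⟩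
      have herase : ((Fi (σ e)).erase e).card = 1 := by
        rw [Finset.card_erase_of_mem heFi, he2]
      have hne : ((Fi (σ e)).erase e).Nonempty := by
        rw [← Finset.card_pos, herase]; norm_num
      have hje : j e = hne.choose := by
        have : j e = if h : ((Fi (σ e)).erase e).Nonempty then h.choose else e := rfl
        rw [this, dif_pos hne]
      have hjmem : j e ∈ (Fi (σ e)).erase e := hje ▸ hne.choose_spec
      have hjne : j e ≠ e := (Finset.mem_erase.mp hjmem).1
      have hjFi : j e ∈ Fi (σ e) := (Finset.mem_erase.mp hjmem).2
      have hjσ : σ (j e) = σ e := (Finset.mem_filter.mp hjFi).2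
      have hFipair : Fi (σ e) = {e, j e} := by
        symm
        apply Finset.eq_of_subset_of_card_le
        · intro g hg
          simp only [Finset.mem_insert, Finset.mem_singleton] at hg
          rcases hg with rfl | rfl
          · exact heFi
          · exact hjFi
        · rw [he2, Finset.card_insert_of_notMem (by simp [hjne.symm]), Finset.card_singleton]
      have hends : ends (j e) = ends e := hpar (σ e) e (j e) hFipair hjne.symm
      have hjpair : j e ∈ pairF ends s := by
        simp only [pairF, Finset.mem_filter, Finset.mem_univ, true_and]
        rw [hends]
        exact (Finset.mem_filter.mp he).2
      refine ⟨hjpair, hjne, ?_⟩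
      -- j (j e) = e
      have hFije : Fi (σ (j e)) = {e, j e} := by rw [hjσ, hFipair]
      have herase2 : (Fi (σ (j e))).erase (j e) = {e} := by
        rw [hFije]
        ext x
        simp only [Finset.mem_erase, Finset.mem_insert, Finset.mem_singleton]
        constructor
        · rintro ⟨hx1, rfl | rfl⟩
          · rfl
          · exact absurd rfl hx1
        · rintro rfl; exact ⟨hjne.symm, Or.inl rfl⟩
      have hne2 : ((Fi (σ (j e))).erase (j e)).Nonempty := by
        rw [herase2]; exact ⟨e, Finset.mem_singleton_self e⟩
      have hje2 : j (j e)
          = if h : ((Fi (σ (j e))).erase (j e)).Nonempty then h.choose else (j e) := rfl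
      rw [dif_pos hne2] at hje2
      have hmem2 := hne2.choose_spec
      have hfin : Exists.choose hne2 ∈ ({e} : Finset E) :=
        (Finset.ext_iff.mp herase2 _).mp hmem2
      rw [Finset.mem_singleton] at hfin
      rw [hje2, hfin]
    have heven_pair : Even (pairF ends s).card := by
      refine even_card_of_invol j (pairF ends s) ?_ ?_ ?_
      · intro e he; exact (hj e he).1
      · intro e he; exact (hj e he).2.1
      · intro e he; exact (hj e he).2.2
    rw [← Nat.not_odd_iff_even] at heven_pair
    exact heven_pair hodd
  -- the odd open pairs inject into the big-fiber edges
  have hodd_le : (oddOpen ends).card ≤ bigE.card := by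
    refine Finset.card_le_card_of_injOn
      (fun s => if h : ∃ e, ends e = s ∧ e ∈ bigE then h.choose else Classical.arbitrary E)
      ?_ ?_
    · intro s hs
      have h := hodd_big s hs
      simp only [dif_pos h]
      exact h.choose_spec.2
    · intro s hs t ht hst
      have h1 := hodd_big s hs
      have h2 := hodd_big t ht
      simp only [dif_pos h1, dif_pos h2] at hst
      rw [← h1.choose_spec.1, ← h2.choose_spec.1, hst]
  -- fiber decompositions
  have hfibsum : (openE ends).card = ∑ i ∈ (openE ends).image σ, (Fi i).card :=
    Finset.card_eq_sum_card_fiberwise (fun e he => Finset.mem_image_of_mem σ he)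
  have hbigsum : bigE.card = ∑ i ∈ (openE ends).image σ, (bigE.filter (fun e => σ e = i)).card :=
    Finset.card_eq_sum_card_fiberwise (fun e he =>
      Finset.mem_image_of_mem σ ((Finset.mem_filter.mp he).1))
  have hper : ∀ i ∈ (openE ends).image σ,
      6 + (bigE.filter (fun e => σ e = i)).card ≤ 3 * (Fi i).card := by
    intro i hi
    obtain ⟨e, he, rfl⟩ := Finset.mem_image.mp hi
    have hne : (Fi (σ e)).Nonempty := ⟨e, Finset.mem_filter.mpr ⟨he, rfl⟩⟩
    have h2 : 2 ≤ (Fi (σ e)).card := htwo _ hne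
    by_cases h3 : 3 ≤ (Fi (σ e)).card
    · have hsub : bigE.filter (fun g => σ g = σ e) ⊆ Fi (σ e) := by
        intro g hg
        obtain ⟨hg1, hg2⟩ := Finset.mem_filter.mp hg
        exact Finset.mem_filter.mpr ⟨(Finset.mem_filter.mp hg1).1, hg2⟩
      have := Finset.card_le_card hsub
      omega
    · have hempty : bigE.filter (fun g => σ g = σ e) = ∅ := by
        rw [Finset.eq_empty_iff_forall_notMem]
        intro g hg
        obtain ⟨hg1, hg2⟩ := Finset.mem_filter.mp hg
        have := (Finset.mem_filter.mp hg1).2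
        rw [hg2] at this
        exact h3 this
      rw [hempty]
      simp only [Finset.card_empty, Nat.add_zero]
      omega
  calc 6 * ((openE ends).image σ).card + (oddOpen ends).card
      ≤ 6 * ((openE ends).image σ).card + bigE.card := by omega
    _ = ∑ i ∈ (openE ends).image σ, (6 + (bigE.filter (fun e => σ e = i)).card) := by
        rw [Finset.sum_add_distrib, Finset.sum_const, ← hbigsum, smul_eq_mul, mul_comm]
    _ ≤ ∑ i ∈ (openE ends).image σ, 3 * (Fi i).card := Finset.sum_le_sum hper
    _ = 3 * (openE ends).card := by rw [← Finset.mul_sum, ← hfibsum]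

end EvenLabelAux

open EvenLabelAux in
/-- In a finite loopless multigraph in which every vertex has even degree at least 2, the
number of even labelings `σ : E(G) → [n]` is at most
`(2|E| − 2|V|)! · n^{|E|/2 − |E_⊕|/6}`, where `E_⊕` counts vertex pairs joined by an odd
number of parallel edges. -/
theorem count_even_labelings_le
    {V E : Type*} [Fintype V] [DecidableEq V] [Fintype E] [DecidableEq E]
    (n : ℕ) (hn : 1 ≤ n)
    (ends : E → Sym2 V) (hloop : ∀ e, ¬ (ends e).IsDiag)
    (hdeg : ∀ v : V,
      Even ((Finset.univ.filter (fun e => v ∈ ends e)).card) ∧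
      2 ≤ (Finset.univ.filter (fun e => v ∈ ends e)).card) :
    (((Finset.univ.filter (fun σ : E → Fin n => IsEvenLabeling ends n σ)).card : ℝ))
      ≤ (Nat.factorial (2 * Fintype.card E - 2 * Fintype.card V) : ℝ) *
        (n : ℝ) ^ ((Fintype.card E : ℝ) / 2 -
          ((Finset.univ.filter (fun s : Sym2 V =>
            Odd ((Finset.univ.filter (fun e => ends e = s)).card))).card : ℝ) / 6) := by
  classical
  have hdeg' : ∀ v : V, Even (mdeg ends v) ∧ 2 ≤ mdeg ends v := hdeg
  set m := (openCls ends).card with hm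
  set c₀ := (closedCls ends).card with hc₀
  set K := (3 * (openE ends).card - (oddOpen ends).card) / 6 with hK
  have hmF : m ≤ 2 * Fintype.card E - 2 * Fintype.card V := by
    have := open_classes_card_le ends hloop hdeg'
    omega
  -- set up the equivalence of open classes with `Fin m`
  have hmcard : Fintype.card {c : Quotient (mset ends) // c ∈ openCls ends} = m := by
    rw [Fintype.card_coe]
  have hccard : Fintype.card {c : Quotient (mset ends) // c ∈ closedCls ends} = c₀ := by
    rw [Fintype.card_coe]
  set ι := Fintype.equivFinOfCardEq hmcard with hι
  -- per-labeling data
  set labQ : (E → Fin n) → Quotient (mset ends) → Fin n := fun σ c => σ c.out with hlabQ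
  set lab1 : (E → Fin n) → Fin m → Fin n := fun σ i => labQ σ (ι.symm i).1 with hlab1
  have hfilne : ∀ (σ : E → Fin n) (i : Fin m),
      (univ.filter fun j => lab1 σ j = lab1 σ i).Nonempty := fun σ i => ⟨i, by simp⟩
  set g : (E → Fin n) → Fin m → Fin m :=
    fun σ i => (univ.filter fun j => lab1 σ j = lab1 σ i).min' (hfilne σ i) with hg
  have hg_le : ∀ (σ : E → Fin n) (i : Fin m), g σ i ≤ i :=
    fun σ i => Finset.min'_le _ _ (by simp)
  have hg_lab : ∀ (σ : E → Fin n) (i : Fin m), lab1 σ (g σ i) = lab1 σ i :=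
    fun σ i => (Finset.mem_filter.mp (Finset.min'_mem _ (hfilne σ i))).2
  have hg_eq : ∀ (σ : E → Fin n) (i i' : Fin m), lab1 σ i = lab1 σ i' → g σ i = g σ i' := by
    intro σ i i' h
    have h1 : g σ i ≤ g σ i' := by
      refine Finset.min'_le _ _ ?_
      refine Finset.mem_filter.mpr ⟨Finset.mem_univ _, ?_⟩
      rw [hg_lab σ i', h]
    have h2 : g σ i' ≤ g σ i := by
      refine Finset.min'_le _ _ ?_
      refine Finset.mem_filter.mpr ⟨Finset.mem_univ _, ?_⟩
      rw [hg_lab σ i, h]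
    exact le_antisymm h1 h2
  have hg_idem : ∀ (σ : E → Fin n) (i : Fin m), g σ (g σ i) = g σ i :=
    fun σ i => hg_eq σ _ _ (hg_lab σ i)
  set lead : (E → Fin n) → Finset (Fin m) := fun σ => univ.filter (fun i => g σ i = i)
    with hlead
  have hlab_mem : ∀ (σ : E → Fin n) (i : Fin m), lab1 σ i ∈ (openE ends).image σ := by
    intro σ i
    refine Finset.mem_image.mpr ⟨((ι.symm i).1).out, ?_, rfl⟩
    have hopen : ¬ IsClosed ends (ι.symm i).1 := (mem_openCls ends).mp (ι.symm i).2
    refine (mem_openE ends).mpr ?_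
    rw [Quotient.out_eq]
    exact hopen
  have hlead_card : ∀ σ : E → Fin n, (lead σ).card ≤ ((openE ends).image σ).card := by
    intro σ
    refine Finset.card_le_card_of_injOn (fun i => lab1 σ i) (fun i _ => hlab_mem σ i) ?_
    intro i hi j hj hij
    have hi' : g σ i = i := (Finset.mem_filter.mp hi).2
    have hj' : g σ j = j := (Finset.mem_filter.mp hj).2
    rw [← hi', ← hj']
    exact hg_eq σ i j hij
  have himg_le : ∀ {σ : E → Fin n}, IsEvenLabeling ends n σ →
      ((openE ends).image σ).card ≤ K := by
    intro σ hσ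
    have h6 := open_label_bound ends hloop hσ
    rw [hK]
    omega
  have hlead_le : ∀ {σ : E → Fin n}, IsEvenLabeling ends n σ → (lead σ).card ≤ K :=
    fun {σ} hσ => le_trans (hlead_card σ) (himg_le hσ)
  set enc : (E → Fin n) → (Fin K → Fin n) := fun σ jj =>
    if hj : (jj : ℕ) < ((lead σ).sort (· ≤ ·)).length then
      lab1 σ (((lead σ).sort (· ≤ ·)).get ⟨jj, hj⟩)
    else ⟨0, hn⟩ with henc
  set hfn : (E → Fin n) → ({c : Quotient (mset ends) // c ∈ closedCls ends} → Fin n) :=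
    fun σ c => labQ σ c.1 with hhfn
  have hconst : ∀ (σ : E → Fin n), IsEvenLabeling ends n σ →
      ∀ e : E, σ e = labQ σ (Quotient.mk (mset ends) e) :=
    fun σ hσ e => sigma_const ends hσ (Quotient.out_eq _).symm
  set Φ : {σ : E → Fin n // IsEvenLabeling ends n σ} →
      ({gg : Fin m → Fin m // ∀ i, gg i ≤ i} × (Fin K → Fin n) ×
        ({c : Quotient (mset ends) // c ∈ closedCls ends} → Fin n)) := fun σ =>
    (⟨g σ.1, hg_le σ.1⟩, enc σ.1, hfn σ.1) with hΦ
  have hΦinj : Function.Injective Φ := by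
    intro σ τ h
    rw [hΦ] at h
    simp only [Prod.mk.injEq, Subtype.mk.injEq] at h
    obtain ⟨hgeq, henceq, hfneq⟩ := h
    apply Subtype.ext
    funext e
    by_cases hcl : IsClosed ends (Quotient.mk (mset ends) e)
    · have h1 : σ.1 e = hfn σ.1 ⟨Quotient.mk (mset ends) e, (mem_closedCls ends).mpr hcl⟩ :=
        hconst σ.1 σ.2 e
      have h2 : τ.1 e = hfn τ.1 ⟨Quotient.mk (mset ends) e, (mem_closedCls ends).mpr hcl⟩ :=
        hconst τ.1 τ.2 e
      rw [h1, h2, hfneq]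
    · set c : {c : Quotient (mset ends) // c ∈ openCls ends} :=
        ⟨Quotient.mk (mset ends) e, (mem_openCls ends).mpr hcl⟩ with hc
      set i := ι c with hi
      have hleadeq : lead σ.1 = lead τ.1 := by
        rw [hlead]
        simp only [hgeq]
      set jj := (((lead σ.1).sort (· ≤ ·)).idxOf (g σ.1 i) : ℕ) with hjj
      have hgiL : g σ.1 i ∈ lead σ.1 :=
        Finset.mem_filter.mpr ⟨Finset.mem_univ _, hg_idem σ.1 i⟩
      have hmemL : g σ.1 i ∈ (lead σ.1).sort (· ≤ ·) := (Finset.mem_sort _).mpr hgiL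
      have hjlen : jj < ((lead σ.1).sort (· ≤ ·)).length := List.idxOf_lt_length_iff.mpr hmemL
      have hjK : jj < K := by
        have hlen : ((lead σ.1).sort (· ≤ ·)).length = (lead σ.1).card :=
          Finset.length_sort _
        have := hlead_le σ.2
        omega
      have hkey : ∀ (σ' : E → Fin n), IsEvenLabeling ends n σ' → g σ' = g σ.1 →
          σ' e = enc σ' ⟨jj, hjK⟩ := by
        intro σ' hσ' hg'
        have hleq : lead σ' = lead σ.1 := by rw [hlead]; simp only [hg']
        have hσe : σ' e = lab1 σ' i := by
          rw [hconst σ' hσ' e]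
          have : ((ι.symm i).1 : Quotient (mset ends)) = Quotient.mk (mset ends) e := by
            rw [hi, Equiv.symm_apply_apply]
          rw [hlab1]
          simp only []
          rw [this]
        have hjlen' : jj < ((lead σ').sort (· ≤ ·)).length := by rw [hleq]; exact hjlen
        have hget : ((lead σ').sort (· ≤ ·)).get ⟨jj, hjlen'⟩ = g σ.1 i := by
          have hl : (lead σ').sort (· ≤ ·) = (lead σ.1).sort (· ≤ ·) := by rw [hleq]
          rw [List.get_eq_getElem]
          simp only [hl, hjj]
          exact List.getElem_idxOf hjlen
        have hE : enc σ' ⟨jj, hjK⟩ = lab1 σ' (g σ.1 i) := by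
          rw [henc]
          simp only [dif_pos hjlen']
          rw [hget]
        rw [hE, ← hg', hg_lab σ' i, hσe]
      have hs := hkey σ.1 σ.2 rfl
      have ht := hkey τ.1 τ.2 hgeq.symm
      rw [hs, ht, henceq]
  -- cardinality bookkeeping
  have hcount : (univ.filter fun σ : E → Fin n => IsEvenLabeling ends n σ).card
      = Fintype.card {σ : E → Fin n // IsEvenLabeling ends n σ} :=
    (Fintype.card_subtype _).symm
  have hGt : Fintype.card {gg : Fin m → Fin m // ∀ i, gg i ≤ i} ≤ Nat.factorial m := by
    have hinj2 : Function.Injective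
        (fun (gg : {gg : Fin m → Fin m // ∀ i, gg i ≤ i}) (i : Fin m) =>
          (⟨(gg.1 i : ℕ), Nat.lt_succ_of_le (gg.2 i)⟩ : Fin ((i : ℕ) + 1))) := by
      intro a b h
      apply Subtype.ext
      funext i
      have h1 := congrFun h i
      simp only [Fin.mk.injEq] at h1
      exact Fin.ext h1
    have hle := Fintype.card_le_of_injective _ hinj2
    rw [Fintype.card_pi] at hle
    calc Fintype.card {gg : Fin m → Fin m // ∀ i, gg i ≤ i}
        ≤ ∏ i : Fin m, Fintype.card (Fin ((i : ℕ) + 1)) := hle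
      _ = ∏ i : Fin m, ((i : ℕ) + 1) := by simp
      _ = ∏ i ∈ Finset.range m, (i + 1) := Fin.prod_univ_eq_prod_range _ _
      _ = Nat.factorial m := Finset.prod_range_add_one_eq_factorial m
  have hmain : (univ.filter fun σ : E → Fin n => IsEvenLabeling ends n σ).card
      ≤ Nat.factorial m * (n ^ K * n ^ c₀) := by
    rw [hcount]
    calc Fintype.card {σ : E → Fin n // IsEvenLabeling ends n σ}
        ≤ Fintype.card ({gg : Fin m → Fin m // ∀ i, gg i ≤ i} × (Fin K → Fin n) ×
            ({c : Quotient (mset ends) // c ∈ closedCls ends} → Fin n)) :=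
          Fintype.card_le_of_injective Φ hΦinj
      _ = Fintype.card {gg : Fin m → Fin m // ∀ i, gg i ≤ i} * (n ^ K * n ^ c₀) := by
          rw [Fintype.card_prod, Fintype.card_prod, Fintype.card_fun, Fintype.card_fun,
            Fintype.card_fin, Fintype.card_fin, hccard]
      _ ≤ Nat.factorial m * (n ^ K * n ^ c₀) := Nat.mul_le_mul_right _ hGt
  -- pass to the reals
  have htO_le : (oddOpen ends).card ≤ (openE ends).card := oddOpen_card_le ends
  have hclosed := closed_bound ends hloop
  have hEsplit : (openE ends).card + (closedE ends).card = Fintype.card E := by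
    have hdisj : Disjoint (openE ends) (closedE ends) := by
      rw [Finset.disjoint_left]
      intro e he1 he2
      exact (mem_openE ends).mp he1 ((mem_closedE ends).mp he2)
    have hunion : openE ends ∪ closedE ends = univ := by
      ext e
      simp only [Finset.mem_union, mem_openE, mem_closedE, Finset.mem_univ, iff_true]
      exact (em _).symm
    rw [← Finset.card_union_of_disjoint hdisj, hunion, Finset.card_univ]
  have hoddsplit : (oddOpen ends).card + (oddClosed ends).card = (oddPairs ends).card := by
    have hdisj : Disjoint (oddOpen ends) (oddClosed ends) := by
      rw [Finset.disjoint_left]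
      intro s hs1 hs2
      exact ((mem_oddOpen ends).mp hs1).2 ((mem_oddClosed ends).mp hs2).2
    have hunion : oddOpen ends ∪ oddClosed ends = oddPairs ends := by
      ext s
      simp only [Finset.mem_union, mem_oddOpen, mem_oddClosed]
      constructor
      · rintro (⟨h1, -⟩ | ⟨h1, -⟩) <;> exact h1
      · intro h1
        rcases em (∃ e, ends e = s ∧ IsClosed ends (Quotient.mk (mset ends) e)) with h | h
        · exact Or.inr ⟨h1, h⟩
        · exact Or.inl ⟨h1, h⟩
    rw [← Finset.card_union_of_disjoint hdisj, hunion]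
  have hodd_eq : ((Finset.univ.filter (fun s : Sym2 V =>
      Odd ((Finset.univ.filter (fun e => ends e = s)).card))).card : ℕ)
      = (oddPairs ends).card := rfl
  have hKreal : (K : ℝ) ≤ 3 * ((openE ends).card : ℝ) / 6 - ((oddOpen ends).card : ℝ) / 6 := by
    have h1 : (K : ℝ) ≤ ((3 * (openE ends).card - (oddOpen ends).card : ℕ) : ℝ) / 6 := by
      rw [hK]
      have h0 : (((3 * (openE ends).card - (oddOpen ends).card) / 6 : ℕ) : ℝ)
          ≤ ((3 * (openE ends).card - (oddOpen ends).card : ℕ) : ℝ) / ((6 : ℕ) : ℝ) :=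
        Nat.cast_div_le
      simpa using h0
    have h2 : ((3 * (openE ends).card - (oddOpen ends).card : ℕ) : ℝ)
        = 3 * ((openE ends).card : ℝ) - ((oddOpen ends).card : ℝ) := by
      have hh : (oddOpen ends).card ≤ 3 * (openE ends).card :=
        le_trans htO_le (Nat.le_mul_of_pos_left _ (by norm_num))
      rw [Nat.cast_sub hh]
      push_cast
      ring
    rw [h2] at h1
    linarith
  have hc0real : (c₀ : ℝ) ≤ 3 * ((closedE ends).card : ℝ) / 6
      - ((oddClosed ends).card : ℝ) / 6 := by
    have := hclosed
    have hcast : 6 * (c₀ : ℝ) + ((oddClosed ends).card : ℝ) ≤ 3 * ((closedE ends).card : ℝ) := by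
      exact_mod_cast this
    linarith
  have hexp : ((K + c₀ : ℕ) : ℝ) ≤ (Fintype.card E : ℝ) / 2 - ((oddPairs ends).card : ℝ) / 6 := by
    have hE' : ((openE ends).card : ℝ) + ((closedE ends).card : ℝ) = (Fintype.card E : ℝ) := by
      exact_mod_cast hEsplit
    have ht' : ((oddOpen ends).card : ℝ) + ((oddClosed ends).card : ℝ)
        = ((oddPairs ends).card : ℝ) := by
      exact_mod_cast hoddsplit
    push_cast
    linarith
  -- final calculation
  have h1n : (1 : ℝ) ≤ (n : ℝ) := by exact_mod_cast hn
  calc (((Finset.univ.filter (fun σ : E → Fin n => IsEvenLabeling ends n σ)).card : ℝ))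
      ≤ ((Nat.factorial m * (n ^ K * n ^ c₀) : ℕ) : ℝ) := by exact_mod_cast hmain
    _ = (Nat.factorial m : ℝ) * (n : ℝ) ^ ((K + c₀ : ℕ) : ℝ) := by
        rw [Real.rpow_natCast]
        push_cast [pow_add]
        ring
    _ ≤ (Nat.factorial (2 * Fintype.card E - 2 * Fintype.card V) : ℝ)
          * (n : ℝ) ^ ((K + c₀ : ℕ) : ℝ) := by
        apply mul_le_mul_of_nonneg_right _ (by positivity)
        exact_mod_cast Nat.factorial_le hmF
    _ ≤ (Nat.factorial (2 * Fintype.card E - 2 * Fintype.card V) : ℝ) *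
        (n : ℝ) ^ ((Fintype.card E : ℝ) / 2 - ((oddPairs ends).card : ℝ) / 6) := by
        apply mul_le_mul_of_nonneg_left _ (by positivity)
        exact Real.rpow_le_rpow_of_exponent_le h1n hexp
    _ = (Nat.factorial (2 * Fintype.card E - 2 * Fintype.card V) : ℝ) *
        (n : ℝ) ^ ((Fintype.card E : ℝ) / 2 -
          ((Finset.univ.filter (fun s : Sym2 V =>
            Odd ((Finset.univ.filter (fun e => ends e = s)).card))).card : ℝ) / 6) := by
        rw [hodd_eq]
end

section
/- Let G be a finite loopless multigraph, and suppose the edge multiset E(G) is partitioned into t nonempty parts E₁,…,E_t, each of which induces a subgraph of G in which every vertex has even degree (an Eulerian subgraph). Let E_⊕(G) denote the number of vertex pairs {a,b} joined by an odd number of parallel edges. Then t ≤ |E(G)|/2 − |E_⊕(G)|/6. -/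
open Finset

/-- If the edge multiset of a finite loopless multigraph (vertices `V`, edge indices `E`,
endpoints `ends`) is partitioned into `t` nonempty parts, each inducing a subgraph in which
every vertex has even degree, then `t ≤ |E|/2 − |E_⊕|/6`, where `E_⊕` is the number of
vertex pairs joined by an odd number of parallel edges. -/
theorem eulerian_partition_count_le
    {V E : Type*} [Fintype V] [DecidableEq V] [Fintype E] [DecidableEq E]
    (ends : E → Sym2 V) (hloop : ∀ e, ¬ (ends e).IsDiag)
    (t : ℕ) (part : E → Fin t) (hsurj : Function.Surjective part)
    (heul : ∀ (j : Fin t) (v : V),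
      Even ((Finset.univ.filter (fun e => part e = j ∧ v ∈ ends e)).card)) :
    (t : ℝ) ≤ (Fintype.card E : ℝ) / 2 -
      (((Finset.univ.filter (fun s : Sym2 V =>
        Odd ((Finset.univ.filter (fun e => ends e = s)).card))).card : ℝ)) / 6 := by
  classical
  -- multiplicity of pair `s` within part `j`
  set mult : Fin t → Sym2 V → ℕ :=
    fun j s => (Finset.univ.filter (fun e => part e = j ∧ ends e = s)).card with hmult
  -- number of edges in part `j`
  set mj : Fin t → ℕ := fun j => (Finset.univ.filter (fun e => part e = j)).card with hmj
  -- odd pairs of part `j`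
  set Qj : Fin t → Finset (Sym2 V) :=
    fun j => Finset.univ.filter (fun s => Odd (mult j s)) with hQj
  -- size of part j is the sum of multiplicities
  have hm_sum : ∀ j, mj j = ∑ s : Sym2 V, mult j s := by
    intro j
    show (Finset.univ.filter (fun e => part e = j)).card = ∑ s : Sym2 V, mult j s
    rw [Finset.card_eq_sum_card_fiberwise (f := ends)
      (t := (Finset.univ : Finset (Sym2 V))) (fun x _ => Finset.mem_univ _)]
    refine Finset.sum_congr rfl fun s _ => ?_
    rw [Finset.filter_filter]
  -- degree decomposition: for each vertex, the set of odd pairs through it is even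
  have hdeg : ∀ (j : Fin t) (v : V),
      Even ((Finset.univ.filter (fun s : Sym2 V => v ∈ s ∧ Odd (mult j s))).card) := by
    intro j v
    have h1 : (Finset.univ.filter (fun e => part e = j ∧ v ∈ ends e)).card
        = ∑ s ∈ Finset.univ.filter (fun s : Sym2 V => v ∈ s), mult j s := by
      rw [Finset.card_eq_sum_card_fiberwise (f := ends)
        (t := Finset.univ.filter (fun s : Sym2 V => v ∈ s))
        (fun e he => by
          simp only [Finset.mem_coe, Finset.mem_filter, Finset.mem_univ, true_and] at he ⊢
          exact he.2)]
      refine Finset.sum_congr rfl fun s hs => ?_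
      simp only [Finset.mem_filter, Finset.mem_univ, true_and] at hs
      rw [Finset.filter_filter]
      congr 1
      ext e
      simp only [Finset.mem_filter, Finset.mem_univ, true_and]
      constructor
      · rintro ⟨⟨h1, _⟩, h2⟩; exact ⟨h1, h2⟩
      · rintro ⟨h1, h2⟩; exact ⟨⟨h1, h2 ▸ hs⟩, h2⟩
    have := heul j v
    rw [h1, Finset.even_sum_iff_even_card_odd] at this
    rwa [Finset.filter_filter] at this
  -- each part has at least 2 edges
  have hm2 : ∀ j, 2 ≤ mj j := by
    intro j
    obtain ⟨e, he⟩ := hsurj j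
    obtain ⟨⟨a, b⟩, hab⟩ := Quot.exists_rep (ends e)
    have ha : a ∈ ends e := by rw [← hab]; exact Sym2.mem_mk_left a b
    have hsub : (Finset.univ.filter (fun x => part x = j ∧ a ∈ ends x))
        ⊆ Finset.univ.filter (fun x => part x = j) := by
      intro x hx
      simp only [Finset.mem_filter, Finset.mem_univ, true_and] at hx ⊢
      exact hx.1
    have hmem : e ∈ Finset.univ.filter (fun x => part x = j ∧ a ∈ ends x) := by
      simp only [Finset.mem_filter, Finset.mem_univ, true_and]
      exact ⟨he, ha⟩
    have h1 : 1 ≤ (Finset.univ.filter (fun x => part x = j ∧ a ∈ ends x)).card :=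
      Finset.card_pos.mpr ⟨e, hmem⟩
    have heven := heul j a
    obtain ⟨k, hk⟩ := heven
    have h2 : 2 ≤ (Finset.univ.filter (fun x => part x = j ∧ a ∈ ends x)).card := by
      omega
    exact le_trans h2 (Finset.card_le_card hsub)
  -- the number of odd pairs of a part is 0 or at least 3
  have hq3 : ∀ j, (Qj j).card = 0 ∨ 3 ≤ (Qj j).card := by
    intro j
    rcases Finset.eq_empty_or_nonempty (Qj j) with h | ⟨s, hs⟩
    · left; rw [h]; rfl
    right
    have hsodd : Odd (mult j s) := by
      simp only [hQj, Finset.mem_filter, Finset.mem_univ, true_and] at hs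
      exact hs
    have hpos : 0 < mult j s := hsodd.pos
    obtain ⟨e, he⟩ := Finset.card_pos.mp hpos
    simp only [Finset.mem_filter, Finset.mem_univ, true_and] at he
    obtain ⟨⟨a, b⟩, hab⟩ := Quot.exists_rep s
    have hne : a ≠ b := by
      intro h
      apply hloop e
      rw [he.2, ← hab, h]
      exact Sym2.isDiag_iff_proj_eq |>.mpr rfl
    have ha : a ∈ s := by rw [← hab]; exact Sym2.mem_mk_left a b
    have hb : b ∈ s := by rw [← hab]; exact Sym2.mem_mk_right a b
    -- find second odd pair through a and through b
    have key : ∀ v : V, v ∈ s → ∃ s' : Sym2 V, Odd (mult j s') ∧ v ∈ s' ∧ s' ≠ s := by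
      intro v hv
      have hev := hdeg j v
      have hmem : s ∈ Finset.univ.filter (fun s' : Sym2 V => v ∈ s' ∧ Odd (mult j s')) := by
        simp only [Finset.mem_filter, Finset.mem_univ, true_and]
        exact ⟨hv, hsodd⟩
      have h1 : 1 ≤ (Finset.univ.filter (fun s' : Sym2 V => v ∈ s' ∧ Odd (mult j s'))).card :=
        Finset.card_pos.mpr ⟨s, hmem⟩
      obtain ⟨k, hk⟩ := hev
      have h2 : 1 < (Finset.univ.filter (fun s' : Sym2 V => v ∈ s' ∧ Odd (mult j s'))).card := by
        omega
      obtain ⟨s', hs', hne'⟩ := Finset.exists_mem_ne h2 s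
      simp only [Finset.mem_filter, Finset.mem_univ, true_and] at hs'
      exact ⟨s', hs'.2, hs'.1, hne'⟩
    obtain ⟨sa, hsa_odd, hsa_mem, hsa_ne⟩ := key a ha
    obtain ⟨sb, hsb_odd, hsb_mem, hsb_ne⟩ := key b hb
    have hab_ne : sa ≠ sb := by
      intro h
      apply hsa_ne
      rw [← hab]
      exact (Sym2.mem_and_mem_iff hne).mp ⟨hsa_mem, h ▸ hsb_mem⟩
    have hsub : ({s, sa, sb} : Finset (Sym2 V)) ⊆ Qj j := by
      intro x hx
      simp only [Finset.mem_insert, Finset.mem_singleton] at hx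
      simp only [hQj, Finset.mem_filter, Finset.mem_univ, true_and]
      rcases hx with rfl | rfl | rfl
      · exact hsodd
      · exact hsa_odd
      · exact hsb_odd
    have hcard : ({s, sa, sb} : Finset (Sym2 V)).card = 3 := by
      rw [Finset.card_insert_of_notMem, Finset.card_insert_of_notMem,
        Finset.card_singleton]
      · simp only [Finset.mem_singleton]; exact hab_ne
      · simp only [Finset.mem_insert, Finset.mem_singleton]
        push_neg
        exact ⟨Ne.symm hsa_ne, Ne.symm hsb_ne⟩
    calc 3 = ({s, sa, sb} : Finset (Sym2 V)).card := hcard.symm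
      _ ≤ (Qj j).card := Finset.card_le_card hsub
  -- the number of odd pairs of a part is at most the part's size
  have hqle : ∀ j, (Qj j).card ≤ mj j := by
    intro j
    rw [hm_sum j]
    calc (Qj j).card = ∑ s ∈ Qj j, 1 := by rw [Finset.card_eq_sum_ones]
      _ ≤ ∑ s ∈ Qj j, mult j s := by
          refine Finset.sum_le_sum fun s hs => ?_
          simp only [hQj, Finset.mem_filter, Finset.mem_univ, true_and] at hs
          exact hs.pos
      _ ≤ ∑ s : Sym2 V, mult j s :=
          Finset.sum_le_sum_of_subset (Finset.subset_univ _)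
  -- total number of edges
  have hm_total : Fintype.card E = ∑ j : Fin t, mj j := by
    rw [← Finset.card_univ]
    rw [Finset.card_eq_sum_card_fiberwise (f := part)
      (t := (Finset.univ : Finset (Fin t))) (fun x _ => Finset.mem_univ _)]
  -- global odd pairs are covered by the parts' odd pairs
  have hQsub : (Finset.univ.filter (fun s : Sym2 V =>
      Odd ((Finset.univ.filter (fun e => ends e = s)).card)))
      ⊆ Finset.univ.biUnion Qj := by
    intro s hs
    simp only [Finset.mem_filter, Finset.mem_univ, true_and] at hs
    have hsum : (Finset.univ.filter (fun e => ends e = s)).card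
        = ∑ j : Fin t, mult j s := by
      rw [Finset.card_eq_sum_card_fiberwise (f := part)
        (t := (Finset.univ : Finset (Fin t))) (fun x _ => Finset.mem_univ _)]
      refine Finset.sum_congr rfl fun j _ => ?_
      rw [Finset.filter_filter]
      congr 1
      ext e
      simp only [Finset.mem_filter, Finset.mem_univ, true_and, and_comm]
    rw [hsum] at hs
    by_contra hcon
    simp only [Finset.mem_biUnion, Finset.mem_univ, true_and, not_exists] at hcon
    have : Even (∑ j : Fin t, mult j s) := by
      refine Finset.even_sum _ fun j _ => ?_
      have := hcon j
      simp only [hQj, Finset.mem_filter, Finset.mem_univ, true_and] at this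
      exact Nat.not_odd_iff_even.mp this
    exact (Nat.not_even_iff_odd.mpr hs) this
  -- the key counting inequality
  have hkey : 6 * t + (Finset.univ.filter (fun s : Sym2 V =>
      Odd ((Finset.univ.filter (fun e => ends e = s)).card))).card
      ≤ 3 * Fintype.card E := by
    have hQcard : (Finset.univ.filter (fun s : Sym2 V =>
        Odd ((Finset.univ.filter (fun e => ends e = s)).card))).card
        ≤ ∑ j : Fin t, (Qj j).card :=
      le_trans (Finset.card_le_card hQsub) (Finset.card_biUnion_le)
    have hper : ∀ j : Fin t, 6 + (Qj j).card ≤ 3 * mj j := by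
      intro j
      rcases hq3 j with h | h
      · have := hm2 j; omega
      · have := hqle j; omega
    have hsum : ∑ j : Fin t, (6 + (Qj j).card) ≤ ∑ j : Fin t, 3 * mj j :=
      Finset.sum_le_sum fun j _ => hper j
    rw [Finset.sum_add_distrib, Finset.sum_const, Finset.card_univ,
      Fintype.card_fin, smul_eq_mul, ← Finset.mul_sum] at hsum
    rw [hm_total]
    omega
  -- conclude over ℝ
  have hR : (6 * t + (Finset.univ.filter (fun s : Sym2 V =>
      Odd ((Finset.univ.filter (fun e => ends e = s)).card))).card : ℝ)
      ≤ 3 * (Fintype.card E : ℝ) := by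
    exact_mod_cast hkey
  push_cast at hR
  linarith
end

section
/- Let pE be a degree-2D Boolean pseudoexpectation on variables x₁,…,x_n. Let q(x) = Σ_σ q̂_σ x^σ be a multilinear polynomial (each monomial x^σ = ∏_{i∈σ} x_i for a set σ ⊆ [n]) and let r be a polynomial with deg q + deg r ≤ D. Then pE[ q·r² ] ≤ ‖q̂‖₁ · pE[ r² ], where ‖q̂‖₁ = Σ_σ |q̂_σ|. -/
open MvPolynomial

section Aux
open Finset

lemma mono_eq (n : ℕ) (σ : Finset (Fin n)) :
    (∏ i ∈ σ, X i : MvPolynomial (Fin n) ℝ) =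
      monomial (∑ i ∈ σ, Finsupp.single i 1) 1 := by
  induction σ using Finset.induction with
  | empty => simp
  | insert _ _ h ih =>
      rw [Finset.prod_insert h, Finset.sum_insert h, ih, X, monomial_mul, one_mul]

lemma ind_sum_apply (n : ℕ) (σ : Finset (Fin n)) (j : Fin n) :
    (∑ i ∈ σ, Finsupp.single i 1 : Fin n →₀ ℕ) j = if j ∈ σ then 1 else 0 := by
  rw [Finsupp.finset_sum_apply]
  simp [Finsupp.single_apply, Finset.sum_ite_eq σ j (fun _ => 1)]

lemma ind_inj (n : ℕ) (σ τ : Finset (Fin n))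
    (h : (∑ i ∈ σ, Finsupp.single i 1 : Fin n →₀ ℕ) = ∑ i ∈ τ, Finsupp.single i 1) :
    σ = τ := by
  ext j
  have := DFunLike.congr_fun h j
  simp only [ind_sum_apply] at this
  by_cases hj : j ∈ σ <;> by_cases hj' : j ∈ τ <;> simp_all

lemma ind_support (n : ℕ) (σ : Finset (Fin n)) :
    (∑ i ∈ σ, Finsupp.single i 1 : Fin n →₀ ℕ).support = σ := by
  ext j
  simp [Finsupp.mem_support_iff, ind_sum_apply]

lemma ind_weight (n : ℕ) (σ : Finset (Fin n)) :
    (∑ i ∈ σ, Finsupp.single i 1 : Fin n →₀ ℕ).sum (fun _ e => e) = σ.card := by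
  rw [Finsupp.sum, ind_support]
  rw [Finset.card_eq_sum_ones]
  exact Finset.sum_congr rfl (fun j hj => by simp [ind_sum_apply, hj])

lemma mono_deg (n : ℕ) (σ : Finset (Fin n)) :
    (∏ i ∈ σ, X i : MvPolynomial (Fin n) ℝ).totalDegree ≤ σ.card := by
  refine (totalDegree_finset_prod σ _).trans ?_
  simp [totalDegree_X]

lemma bool_reduce (n D : ℕ) (pE : MvPolynomial (Fin n) ℝ →ₗ[ℝ] ℝ)
    (hbool : ∀ (i : Fin n) (q : MvPolynomial (Fin n) ℝ), q.totalDegree ≤ 2 * D - 2 →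
      pE (MvPolynomial.X i ^ 2 * q) = pE q)
    (σ : Finset (Fin n)) (p : MvPolynomial (Fin n) ℝ)
    (hd : p.totalDegree + 2 * σ.card ≤ 2 * D) :
    pE ((∏ i ∈ σ, X i) ^ 2 * p) = pE p := by
  induction σ using Finset.induction generalizing p with
  | empty => simp
  | @insert a s h ih =>
      have hcard : (insert a s).card = s.card + 1 := Finset.card_insert_of_notMem h
      have hdeg2 : ((∏ i ∈ s, X i) ^ 2 * p).totalDegree ≤ 2 * D - 2 := by
        refine (totalDegree_mul _ _).trans ?_
        have h1 : ((∏ i ∈ s, X i : MvPolynomial (Fin n) ℝ) ^ 2).totalDegree ≤ 2 * s.card := by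
          refine (totalDegree_pow _ _).trans ?_
          have := mono_deg n s; omega
        omega
      have heq : (∏ i ∈ insert a s, X i : MvPolynomial (Fin n) ℝ) ^ 2 * p
          = X a ^ 2 * ((∏ i ∈ s, X i) ^ 2 * p) := by
        rw [Finset.prod_insert h]; ring
      rw [heq, hbool a _ hdeg2, ih p (by omega)]

lemma key_bound (n D : ℕ) (pE : MvPolynomial (Fin n) ℝ →ₗ[ℝ] ℝ)
    (hsos : ∀ p : MvPolynomial (Fin n) ℝ, p.totalDegree ≤ D → 0 ≤ pE (p ^ 2))
    (hbool : ∀ (i : Fin n) (q : MvPolynomial (Fin n) ℝ), q.totalDegree ≤ 2 * D - 2 →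
      pE (MvPolynomial.X i ^ 2 * q) = pE q)
    (σ : Finset (Fin n)) (r : MvPolynomial (Fin n) ℝ)
    (hd : σ.card + r.totalDegree ≤ D) :
    |pE ((∏ i ∈ σ, X i) * r ^ 2)| ≤ pE (r ^ 2) := by
  set m : MvPolynomial (Fin n) ℝ := ∏ i ∈ σ, X i with hm
  have hmd : m.totalDegree ≤ σ.card := mono_deg n σ
  have hred : pE (m ^ 2 * r ^ 2) = pE (r ^ 2) := by
    refine bool_reduce n D pE hbool σ (r ^ 2) ?_
    have := totalDegree_pow r 2; omega
  have hdeg1 : ∀ c : MvPolynomial (Fin n) ℝ, c.totalDegree = 0 →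
      ((c + m) * r).totalDegree ≤ D := by
    intro c hc
    refine (totalDegree_mul _ _).trans ?_
    have : (c + m).totalDegree ≤ σ.card := le_trans (totalDegree_add _ _) (by omega)
    omega
  have h1 := hsos ((1 + m) * r) (hdeg1 1 totalDegree_one)
  have h2 := hsos ((-1 + m) * r) (hdeg1 (-1) (by simpa using totalDegree_neg (1 : MvPolynomial (Fin n) ℝ)))
  have e1 : ((1 + m) * r) ^ 2 = r ^ 2 + (m * r ^ 2 + m * r ^ 2) + m ^ 2 * r ^ 2 := by ring
  have e2 : ((-1 + m) * r) ^ 2 = r ^ 2 - (m * r ^ 2 + m * r ^ 2) + m ^ 2 * r ^ 2 := by ring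
  rw [e1, map_add, map_add, map_add] at h1
  rw [e2, map_add, map_sub, map_add] at h2
  rw [hred] at h1 h2
  rw [abs_le]
  constructor <;> linarith

lemma coeff_of_sum (n : ℕ) (qhat : Finset (Fin n) → ℝ) (σ : Finset (Fin n)) :
    MvPolynomial.coeff (∑ i ∈ σ, Finsupp.single i 1)
      (∑ τ : Finset (Fin n), MvPolynomial.C (qhat τ) * ∏ i ∈ τ, (X i : MvPolynomial (Fin n) ℝ))
      = qhat σ := by
  rw [coeff_sum]
  have : ∀ τ : Finset (Fin n),
      MvPolynomial.coeff (∑ i ∈ σ, Finsupp.single i 1)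
        (MvPolynomial.C (qhat τ) * ∏ i ∈ τ, (X i : MvPolynomial (Fin n) ℝ))
      = if (∑ i ∈ τ, Finsupp.single i 1 : Fin n →₀ ℕ) = ∑ i ∈ σ, Finsupp.single i 1
          then qhat τ else 0 := by
    intro τ
    rw [mono_eq, coeff_C_mul, coeff_monomial]
    split <;> simp
  rw [Finset.sum_congr rfl (fun τ _ => this τ)]
  rw [Finset.sum_eq_single_of_mem σ (Finset.mem_univ σ)]
  · simp
  · intro τ _ hne
    rw [if_neg (fun h => hne (ind_inj n τ σ h))]

end Aux

/-- If `pE` is a degree-`2D` Boolean pseudoexpectation, `q` is a multilinear polynomial with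
coefficients `q̂`, and `deg q + deg r ≤ D`, then `pE[q·r²] ≤ ‖q̂‖₁ · pE[r²]`. -/
theorem pseudoexpectation_l1_bound
    (n D : ℕ) (pE : MvPolynomial (Fin n) ℝ →ₗ[ℝ] ℝ)
    (hone : pE 1 = 1)
    (hsos : ∀ p : MvPolynomial (Fin n) ℝ, p.totalDegree ≤ D → 0 ≤ pE (p ^ 2))
    (hbool : ∀ (i : Fin n) (q : MvPolynomial (Fin n) ℝ), q.totalDegree ≤ 2 * D - 2 →
      pE (MvPolynomial.X i ^ 2 * q) = pE q)
    (qhat : Finset (Fin n) → ℝ)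
    (q r : MvPolynomial (Fin n) ℝ)
    (hq : q = ∑ σ : Finset (Fin n), MvPolynomial.C (qhat σ) * ∏ i ∈ σ, MvPolynomial.X i)
    (hdeg : q.totalDegree + r.totalDegree ≤ D) :
    pE (q * r ^ 2) ≤ (∑ σ : Finset (Fin n), |qhat σ|) * pE (r ^ 2) := by
  have hrD : r.totalDegree ≤ D := le_trans (Nat.le_add_left _ _) hdeg
  have hr2 : 0 ≤ pE (r ^ 2) := hsos r hrD
  have hexp : pE (q * r ^ 2) = ∑ σ : Finset (Fin n), qhat σ * pE ((∏ i ∈ σ, X i) * r ^ 2) := by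
    rw [hq, Finset.sum_mul, map_sum]
    refine Finset.sum_congr rfl (fun σ _ => ?_)
    rw [mul_assoc, ← MvPolynomial.smul_eq_C_mul, map_smul, smul_eq_mul]
  rw [hexp, Finset.sum_mul]
  refine Finset.sum_le_sum (fun σ _ => ?_)
  by_cases h0 : qhat σ = 0
  · simp [h0]
  · have hcard : σ.card ≤ q.totalDegree := by
      have hc : q.coeff (∑ i ∈ σ, Finsupp.single i 1) = qhat σ := by
        rw [hq]; exact coeff_of_sum n qhat σ
      have hmem : (∑ i ∈ σ, Finsupp.single i 1 : Fin n →₀ ℕ) ∈ q.support := by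
        rw [MvPolynomial.mem_support_iff, hc]; exact h0
      have := MvPolynomial.le_totalDegree hmem
      rwa [ind_weight] at this
    have hkey := key_bound n D pE hsos hbool σ r (by omega)
    calc qhat σ * pE ((∏ i ∈ σ, X i) * r ^ 2)
        ≤ |qhat σ * pE ((∏ i ∈ σ, X i) * r ^ 2)| := le_abs_self _
      _ = |qhat σ| * |pE ((∏ i ∈ σ, X i) * r ^ 2)| := abs_mul _ _
      _ ≤ |qhat σ| * pE (r ^ 2) := mul_le_mul_of_nonneg_left hkey (abs_nonneg _)
end

section
/- Let k be even, let d ≥ 2 be an even integer, let α > 0, and let T be an order-k tensor on [n] with natural n^{k/2} × n^{k/2} flattening T_flat. Let pE be a linear functional on real polynomials in x₁,…,x_n of degree at most dk such that pE[1] = 1, pE[p²] ≥ 0 for every polynomial p of degree at most dk/2, and pE[ (Σ_{i∈[n]} x_i² − α) · q ] = 0 for every polynomial q of degree at most dk − 2. Then | pE[ ⟨T, x^{⊗k}⟩ ] | ≤ α^{k/2} · ( ‖ E_{Π,Σ∈Ŝ_{dk/2}}[ Π (T_flat)^{⊗d} Σ ] ‖ )^{1/d}. -/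
open MeasureTheory Matrix MvPolynomial

/-- The spectral (operator) norm of a square real matrix. -/
noncomputable def sNorm {ι : Type*} [Fintype ι] [DecidableEq ι] (M : Matrix ι ι ℝ) : ℝ :=
  ‖Matrix.toEuclideanCLM (𝕜 := ℝ) M‖

/-- Average of `Π M Σ` over independent uniformly random permutation matrices `Π, Σ`
acting on the positions of tuple-indexed rows and columns. -/
noncomputable def symAvg {ι κ' : Type*} [Fintype ι] [DecidableEq ι] [Fintype κ']
    (M : Matrix (ι → κ') (ι → κ') ℝ) : Matrix (ι → κ') (ι → κ') ℝ :=
  fun I J => (∑ π : Equiv.Perm ι, ∑ σ : Equiv.Perm ι, M (I ∘ π) (J ∘ σ)) /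
    ((Fintype.card (Equiv.Perm ι) : ℝ) ^ 2)

/-- Combine two `κ`-tuples into a `k = 2κ`-tuple (first `a`, then `b`). -/
def joinIdx {n k κ : ℕ} (hk : k = 2 * κ) (a b : Fin κ → Fin n) : Fin k → Fin n :=
  fun i => if h : (i : ℕ) < κ then a ⟨i, h⟩ else b ⟨(i : ℕ) - κ, by have := i.isLt; omega⟩

/-- The natural flattening of an order-`2κ` tensor to an `n^κ × n^κ` matrix. -/
def flatten {n k κ : ℕ} (hk : k = 2 * κ) (A : (Fin k → Fin n) → ℝ) :
    Matrix (Fin κ → Fin n) (Fin κ → Fin n) ℝ :=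
  fun a b => A (joinIdx hk a b)

/-- The `d`-fold Kronecker power of a flattened tensor, with rows and columns
reindexed by `(d·κ)`-tuples. -/
noncomputable def kronFlat {n κ : ℕ} (d : ℕ) (M : Matrix (Fin κ → Fin n) (Fin κ → Fin n) ℝ) :
    Matrix ((Fin d × Fin κ) → Fin n) ((Fin d × Fin κ) → Fin n) ℝ :=
  fun I J => ∏ t : Fin d, M (fun s => I (t, s)) (fun s => J (t, s))


lemma pE_CS {n : ℕ} (pE : MvPolynomial (Fin n) ℝ →ₗ[ℝ] ℝ) (D : ℕ)
    (hsos : ∀ p : MvPolynomial (Fin n) ℝ, p.totalDegree ≤ D → 0 ≤ pE (p ^ 2))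
    (p q : MvPolynomial (Fin n) ℝ) (hp : p.totalDegree ≤ D) (hq : q.totalDegree ≤ D) :
    (pE (p * q)) ^ 2 ≤ pE (p ^ 2) * pE (q ^ 2) := by
  have key : ∀ t : ℝ, 0 ≤ pE (p ^ 2) * (t * t) + (2 * pE (p * q)) * t + pE (q ^ 2) := by
    intro t
    have hdeg : (t • p + q).totalDegree ≤ D :=
      le_trans (totalDegree_add _ _) (max_le (le_trans (totalDegree_smul_le t p) hp) hq)
    have h0 := hsos _ hdeg
    have hexp : (t • p + q) ^ 2 = (t * t) • p ^ 2 + (2 * t) • (p * q) + q ^ 2 := by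
      rw [smul_eq_C_mul, smul_eq_C_mul, smul_eq_C_mul, _root_.map_mul, _root_.map_mul, map_ofNat]
      ring
    rw [hexp, map_add, map_add, _root_.map_smul, _root_.map_smul, smul_eq_mul, smul_eq_mul] at h0
    linarith [h0]
  have hdisc := discrim_le_zero key
  rw [discrim] at hdisc
  nlinarith [hdisc]

lemma pE_pow_le {n : ℕ} (pE : MvPolynomial (Fin n) ℝ →ₗ[ℝ] ℝ) (D : ℕ)
    (hone : pE 1 = 1)
    (hsos : ∀ p : MvPolynomial (Fin n) ℝ, p.totalDegree ≤ D → 0 ≤ pE (p ^ 2))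
    (P : MvPolynomial (Fin n) ℝ) (m : ℕ) (hm : 1 ≤ m)
    (hdeg : ∀ j ≤ m, (P ^ j).totalDegree ≤ D) :
    (pE P) ^ (2 * m) ≤ pE (P ^ (2 * m)) := by
  set g : ℕ → ℝ := fun j => pE (P ^ (2 * j)) with hg
  have hsq : ∀ j, P ^ (2 * j) = (P ^ j) ^ 2 := fun j => by
    rw [← pow_mul, mul_comm]
  have gnn : ∀ j, j ≤ m → 0 ≤ g j := by
    intro j hj
    rw [hg]
    simp only
    rw [hsq]
    exact hsos _ (hdeg j hj)
  have g0 : g 0 = 1 := by simpa [hg] using hone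
  have logcvx : ∀ j, j + 2 ≤ m → g (j + 1) ^ 2 ≤ g j * g (j + 2) := by
    intro j hj
    have h := pE_CS pE D hsos (P ^ j) (P ^ (j + 2)) (hdeg j (by omega)) (hdeg (j + 2) hj)
    have h1 : P ^ j * P ^ (j + 2) = P ^ (2 * (j + 1)) := by rw [← pow_add]; ring_nf
    have h2 : (P ^ j) ^ 2 = P ^ (2 * j) := (hsq j).symm
    have h3 : (P ^ (j + 2)) ^ 2 = P ^ (2 * (j + 2)) := (hsq (j + 2)).symm
    rw [h1, h2, h3] at h
    exact h
  have step : ∀ j, j + 1 ≤ m → g 1 * g j ≤ g (j + 1) := by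
    intro j
    induction j with
    | zero => intro _; rw [g0, mul_one]
    | succ j ih =>
      intro hj
      have hIH := ih (by omega)
      have hlc := logcvx j (by omega)
      rcases le_or_gt (g j) 0 with hgj | hgj
      · have hgj0 : g j = 0 := le_antisymm hgj (gnn j (by omega))
        rw [hgj0, zero_mul] at hlc
        have : g (j + 1) = 0 := by nlinarith [gnn (j+1) (by omega : j+1 ≤ m)]
        rw [this, mul_zero]
        exact gnn (j + 2) hj
      · have hj1nn : 0 ≤ g (j + 1) := gnn (j + 1) (by omega)
        have h1 : g 1 * g j * g (j + 1) ≤ g (j + 1) * g (j + 1) := by nlinarith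
        have h2 : g 1 * g (j + 1) * g j ≤ g (j + 2) * g j := by nlinarith [sq_nonneg (g (j+1))]
        exact le_of_mul_le_mul_right (by linarith) hgj
  have chain : ∀ j, j ≤ m → g 1 ^ j ≤ g j := by
    intro j
    induction j with
    | zero => intro _; rw [pow_zero, g0]
    | succ j ih =>
      intro hj
      have h1 : g 1 ^ (j + 1) = g 1 * g 1 ^ j := by ring
      have h2 : g 1 * g 1 ^ j ≤ g 1 * g j :=
        mul_le_mul_of_nonneg_left (ih (by omega)) (gnn 1 hm)
      exact le_trans (le_of_eq h1) (le_trans h2 (step j hj))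
  have hP2 : (pE P) ^ 2 ≤ g 1 := by
    have h := pE_CS pE D hsos P 1 (by simpa using hdeg 1 hm) (by simp)
    simpa [hone, hg, mul_one] using h
  calc (pE P) ^ (2 * m) = ((pE P) ^ 2) ^ m := by rw [← pow_mul]
    _ ≤ (g 1) ^ m := pow_le_pow_left₀ (sq_nonneg _) hP2 m
    _ ≤ g m := chain m le_rfl

lemma quad_le {ι : Type*} [Fintype ι] [DecidableEq ι] (N : Matrix ι ι ℝ) (u : ι → ℝ) :
    u ⬝ᵥ N.mulVec u ≤ sNorm N * ∑ i, u i ^ 2 := by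
  set v : EuclideanSpace ℝ ι := (WithLp.equiv 2 (ι → ℝ)).symm u with hv
  set f := Matrix.toEuclideanCLM (𝕜 := ℝ) N with hf
  have hnorm : ‖v‖ ^ 2 = ∑ i, u i ^ 2 := by
    rw [EuclideanSpace.norm_eq, Real.sq_sqrt (by positivity)]
    simp [hv, sq_abs]
  have happ : f v = (WithLp.equiv 2 (ι → ℝ)).symm (N.mulVec u) := by
    rw [hf, hv]; rfl
  have hinner : u ⬝ᵥ N.mulVec u = inner ℝ v (f v) := by
    rw [happ]
    simp [PiLp.inner_apply, RCLike.inner_apply, dotProduct, hv, mul_comm]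
  rw [hinner]
  calc inner ℝ v (f v) ≤ ‖v‖ * ‖f v‖ := real_inner_le_norm v (f v)
    _ ≤ ‖v‖ * (‖f‖ * ‖v‖) := by
        exact mul_le_mul_of_nonneg_left (f.le_opNorm v) (norm_nonneg v)
    _ = ‖f‖ * ‖v‖ ^ 2 := by ring
    _ = sNorm N * ∑ i, u i ^ 2 := by rw [hnorm]; rfl

lemma trace_ineq {ι : Type*} [Fintype ι] [DecidableEq ι] (N G : Matrix ι ι ℝ)
    (hG : G.PosSemidef) :
    ∑ I, ∑ J, N I J * G I J ≤ sNorm N * ∑ I, G I I := by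
  obtain ⟨S, hSpsd, hSS⟩ : ∃ S : Matrix ι ι ℝ, S.PosSemidef ∧ S * S = G :=
    by open scoped MatrixOrder in exact ⟨CFC.sqrt G, (CFC.sqrt_nonneg G).posSemidef, CFC.sqrt_mul_sqrt_self G hG.nonneg⟩
  have hSsymm : ∀ i j, S i j = S j i := by
    intro i j
    conv_lhs => rw [← hSpsd.1]
    simp [Matrix.conjTranspose_apply]
  have hdiag : ∀ I, (S * N * S) I I ≤ sNorm N * G I I := by
    intro I
    have h1 : (S * N * S) I I = (S I) ⬝ᵥ N.mulVec (S I) := by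
      simp only [Matrix.mul_apply, dotProduct, Matrix.mulVec, Finset.sum_mul, Finset.mul_sum]
      rw [Finset.sum_comm]
      refine Finset.sum_congr rfl fun K _ => Finset.sum_congr rfl fun J _ => ?_
      rw [hSsymm J I]; ring
    have h2 : ∑ j, (S I j) ^ 2 = G I I := by
      rw [← hSS, Matrix.mul_apply]
      exact Finset.sum_congr rfl fun j _ => by rw [hSsymm j I]; ring
    rw [h1, ← h2]
    exact quad_le N (S I)
  have hGsymm : ∀ i j, G i j = G j i := by
    intro i j
    conv_lhs => rw [← hG.1]
    simp [Matrix.conjTranspose_apply]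
  have h3 : ∑ I, ∑ J, N I J * G I J = ∑ I, (S * N * S) I I := by
    have t1 : ∑ I, ∑ J, N I J * G I J = Matrix.trace (N * G) := by
      simp only [Matrix.trace, Matrix.diag, Matrix.mul_apply]
      exact Finset.sum_congr rfl fun I _ => Finset.sum_congr rfl fun J _ => by
        rw [hGsymm I J]
    rw [t1, ← hSS, ← Matrix.mul_assoc, Matrix.trace_mul_comm, Matrix.mul_assoc,
      ← Matrix.mul_assoc]
    simp [Matrix.trace, Matrix.diag]
  rw [h3, Finset.mul_sum]
  exact Finset.sum_le_sum fun I _ => hdiag I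

lemma sum_pow_card {ι β R : Type*} [Fintype ι] [DecidableEq ι] [Fintype β] [DecidableEq β]
    [CommSemiring R] (f : β → R) :
    (∑ x : β, f x) ^ (Fintype.card ι) = ∑ g : ι → β, ∏ i : ι, f (g i) := by
  rw [← Finset.card_univ, ← Finset.prod_const, Finset.prod_univ_sum, Fintype.piFinset_univ]

lemma prod_joinIdx {n k κ : ℕ} (hk : k = 2 * κ) {M : Type*} [CommMonoid M]
    (a b : Fin κ → Fin n) (f : Fin n → M) :
    ∏ j : Fin k, f (joinIdx hk a b j) = (∏ s : Fin κ, f (a s)) * ∏ s : Fin κ, f (b s) := by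
  have h2 : κ + κ = k := by omega
  rw [← Fintype.prod_equiv (finCongr h2) (fun j => f (joinIdx hk a b (finCongr h2 j))) _
    (fun j => rfl)]
  rw [Fin.prod_univ_add]
  congr 1
  · refine Finset.prod_congr rfl fun s _ => ?_
    congr 1
    simp [joinIdx, finCongr, s.isLt]
  · refine Finset.prod_congr rfl fun s _ => ?_
    have hnot : ¬ ((κ + (s : ℕ)) < κ) := by omega
    simp only [joinIdx, finCongr, Fin.natAdd, Equiv.coe_fn_mk, Fin.cast]
    simp only [hnot, ↓reduceDIte]
    congr 1
    ext
    simp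

def splitEquiv {n k κ d : ℕ} (hk : k = 2 * κ) :
    (((Fin d × Fin κ) → Fin n) × ((Fin d × Fin κ) → Fin n)) ≃ (Fin d → Fin k → Fin n) where
  toFun IJ := fun t => joinIdx hk (fun s => IJ.1 (t, s)) (fun s => IJ.2 (t, s))
  invFun g := (fun p => g p.1 ⟨p.2, by have := p.2.isLt; omega⟩,
               fun p => g p.1 ⟨κ + p.2, by have := p.2.isLt; omega⟩)
  left_inv := by
    intro IJ
    refine Prod.ext (funext fun p => ?_) (funext fun p => ?_)
    · simp only [joinIdx, p.2.isLt, dif_pos]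
    · have hnot : ¬ ((κ + (p.2 : ℕ)) < κ) := by omega
      simp only [joinIdx]
      rw [dif_neg hnot]
      ext; simp
  right_inv := by
    intro g
    funext t j
    simp only [joinIdx]
    by_cases h : (j : ℕ) < κ
    · rw [dif_pos h]
    · rw [dif_neg h]
      congr 1
      ext
      simp only []
      omega

lemma symAvg_bilinear {ι κ' : Type*} [Fintype ι] [DecidableEq ι] [Fintype κ'] [DecidableEq κ']
    (A : Matrix (ι → κ') (ι → κ') ℝ) (w : (ι → κ') → (ι → κ') → ℝ)
    (hw : ∀ (π σ : Equiv.Perm ι) (I J : ι → κ'), w (I ∘ π) (J ∘ σ) = w I J) :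
    ∑ I, ∑ J, symAvg A I J * w I J = ∑ I, ∑ J, A I J * w I J := by
  set c : ℝ := (Fintype.card (Equiv.Perm ι) : ℝ) with hc
  have hc0 : c ≠ 0 := Nat.cast_ne_zero.mpr Fintype.card_ne_zero
  have main : ∀ π σ : Equiv.Perm ι,
      ∑ I, ∑ J, A (I ∘ π) (J ∘ σ) * w I J = ∑ I, ∑ J, A I J * w I J := by
    intro π σ
    have hrw : ∀ I J : ι → κ', A (I ∘ π) (J ∘ σ) * w I J
        = A (I ∘ π) (J ∘ σ) * w (I ∘ π) (J ∘ σ) := fun I J => by rw [hw]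
    simp_rw [hrw]
    refine Fintype.sum_equiv (Equiv.arrowCongr π.symm (Equiv.refl κ')) _ _ fun I => ?_
    refine Fintype.sum_equiv (Equiv.arrowCongr σ.symm (Equiv.refl κ')) _ _ fun J => ?_
    rfl
  calc ∑ I, ∑ J, symAvg A I J * w I J
      = ∑ I, ∑ J, (∑ π : Equiv.Perm ι, ∑ σ : Equiv.Perm ι, A (I ∘ π) (J ∘ σ) * w I J) / c ^ 2 := by
        refine Finset.sum_congr rfl fun I _ => Finset.sum_congr rfl fun J _ => ?_
        rw [symAvg, div_mul_eq_mul_div, Finset.sum_mul]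
        congr 1
        exact Finset.sum_congr rfl fun π _ => Finset.sum_mul _ _ _
    _ = (∑ I, ∑ J, ∑ π : Equiv.Perm ι, ∑ σ : Equiv.Perm ι, A (I ∘ π) (J ∘ σ) * w I J) / c ^ 2 := by
        simp_rw [Finset.sum_div]
    _ = (∑ π : Equiv.Perm ι, ∑ σ : Equiv.Perm ι, ∑ I, ∑ J, A (I ∘ π) (J ∘ σ) * w I J) / c ^ 2 := by
        congr 1
        calc ∑ I, ∑ J, ∑ π : Equiv.Perm ι, ∑ σ : Equiv.Perm ι, A (I ∘ π) (J ∘ σ) * w I J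
            = ∑ I, ∑ π : Equiv.Perm ι, ∑ J, ∑ σ : Equiv.Perm ι, A (I ∘ π) (J ∘ σ) * w I J :=
              Finset.sum_congr rfl fun I _ => Finset.sum_comm
          _ = ∑ π : Equiv.Perm ι, ∑ I, ∑ J, ∑ σ : Equiv.Perm ι, A (I ∘ π) (J ∘ σ) * w I J :=
              Finset.sum_comm
          _ = ∑ π : Equiv.Perm ι, ∑ I, ∑ σ : Equiv.Perm ι, ∑ J, A (I ∘ π) (J ∘ σ) * w I J :=
              Finset.sum_congr rfl fun π _ => Finset.sum_congr rfl fun I _ =>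
                Finset.sum_comm
          _ = ∑ π : Equiv.Perm ι, ∑ σ : Equiv.Perm ι, ∑ I, ∑ J, A (I ∘ π) (J ∘ σ) * w I J :=
              Finset.sum_congr rfl fun π _ => Finset.sum_comm
    _ = (∑ π : Equiv.Perm ι, ∑ σ : Equiv.Perm ι, ∑ I, ∑ J, A I J * w I J) / c ^ 2 := by
        simp_rw [main]
    _ = ∑ I, ∑ J, A I J * w I J := by
        simp only [Finset.sum_const, Finset.card_univ, nsmul_eq_mul]
        field_simp
        ring

set_option maxHeartbeats 4000000 in
/-- Degree-`dk` SoS bound on the pseudoexpectation of `⟨T, x^{⊗k}⟩` under the sphere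
constraint `Σ xᵢ² = α`: it is at most `α^{k/2}` times the `d`-th root of the spectral norm of
the permutation-averaged `d`-th Kronecker power of the natural flattening of `T`. -/
theorem sos_tensor_norm_bound
    (n k κ d : ℕ) (hk : k = 2 * κ)
    (hd : 2 ≤ d) (hdEven : Even d)
    (α : ℝ) (hα : 0 < α)
    (T : (Fin k → Fin n) → ℝ)
    (pE : MvPolynomial (Fin n) ℝ →ₗ[ℝ] ℝ)
    (hone : pE 1 = 1)
    (hsos : ∀ p : MvPolynomial (Fin n) ℝ, p.totalDegree ≤ d * κ → 0 ≤ pE (p ^ 2))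
    (hsphere : ∀ q : MvPolynomial (Fin n) ℝ, q.totalDegree ≤ d * k - 2 →
      pE (((∑ i : Fin n, MvPolynomial.X i ^ 2) - MvPolynomial.C α) * q) = 0) :
    |pE (∑ i : Fin k → Fin n, MvPolynomial.C (T i) * ∏ j : Fin k, MvPolynomial.X (i j))|
      ≤ α ^ κ * (sNorm (symAvg (kronFlat d (flatten hk T)))) ^ (1 / (d : ℝ)) := by
  obtain ⟨m, hm⟩ := hdEven
  have hd2m : d = 2 * m := by omega
  have hm1 : 1 ≤ m := by omega
  set P : MvPolynomial (Fin n) ℝ :=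
    ∑ i : Fin k → Fin n, C (T i) * ∏ j : Fin k, X (i j) with hP
  set A := kronFlat d (flatten hk T) with hA
  set N := symAvg A with hN
  set mono : ((Fin d × Fin κ) → Fin n) → MvPolynomial (Fin n) ℝ :=
    fun I => ∏ p : Fin d × Fin κ, X (I p) with hmono
  have hcard : Fintype.card (Fin d × Fin κ) = d * κ := by simp
  have hmonodeg : ∀ I, (mono I).totalDegree ≤ d * κ := by
    intro I
    refine le_trans (totalDegree_finset_prod _ _) ?_
    calc ∑ p : Fin d × Fin κ, (X (I p) : MvPolynomial (Fin n) ℝ).totalDegree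
        ≤ ∑ _p : Fin d × Fin κ, 1 :=
          Finset.sum_le_sum fun p _ => le_of_eq (totalDegree_X _)
      _ = d * κ := by simp [hcard]
  have hPdeg : P.totalDegree ≤ k := by
    rw [hP]
    refine le_trans (totalDegree_finset_sum _ _) (Finset.sup_le fun i _ => ?_)
    refine le_trans (totalDegree_mul _ _) ?_
    rw [totalDegree_C, zero_add]
    refine le_trans (totalDegree_finset_prod _ _) ?_
    calc ∑ j : Fin k, (X (i j) : MvPolynomial (Fin n) ℝ).totalDegree
        ≤ ∑ _j : Fin k, 1 := Finset.sum_le_sum fun j _ => le_of_eq (totalDegree_X _)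
      _ = k := by simp
  have hmk : m * k = d * κ := by rw [hk, hd2m]; ring
  have hPjdeg : ∀ j ≤ m, (P ^ j).totalDegree ≤ d * κ := by
    intro j hj
    refine le_trans (totalDegree_pow _ _) ?_
    calc j * P.totalDegree ≤ m * k := Nat.mul_le_mul hj hPdeg
      _ = d * κ := hmk
  have habs : (pE P) ^ d ≤ pE (P ^ d) := by
    rw [hd2m]
    exact pE_pow_le pE (d * κ) hone hsos P m hm1 hPjdeg
  set S : MvPolynomial (Fin n) ℝ := ∑ i : Fin n, X i ^ 2 with hS
  have hSdeg : S.totalDegree ≤ 2 := by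
    rw [hS]
    refine le_trans (totalDegree_finset_sum _ _) (Finset.sup_le fun i _ => ?_)
    refine le_trans (totalDegree_pow _ _) ?_
    rw [totalDegree_X]
  have hSpow : ∀ j, 2 * j ≤ d * k → pE (S ^ j) = α ^ j := by
    intro j
    induction j with
    | zero => intro _; simpa using hone
    | succ j ih =>
      intro hj
      have hq : (S ^ j).totalDegree ≤ d * k - 2 := by
        refine le_trans (totalDegree_pow _ _) ?_
        have h1 : j * S.totalDegree ≤ j * 2 := Nat.mul_le_mul_left j hSdeg
        omega
      have h0 := hsphere (S ^ j) hq
      have hsplit : S ^ (j + 1) = (S - C α) * S ^ j + α • S ^ j := by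
        rw [smul_eq_C_mul]; ring
      rw [hsplit, map_add, _root_.map_smul, h0, smul_eq_mul, ih (by omega), zero_add, pow_succ]
      ring
  set G : Matrix ((Fin d × Fin κ) → Fin n) ((Fin d × Fin κ) → Fin n) ℝ :=
    Matrix.of (fun I J => pE (mono I * mono J)) with hG
  have hGapp : ∀ I J, G I J = pE (mono I * mono J) := fun I J => rfl
  have hGpsd : G.PosSemidef := by
    refine Matrix.PosSemidef.of_dotProduct_mulVec_nonneg ?_ ?_
    · ext I J
      rw [Matrix.conjTranspose_apply, hGapp, hGapp, star_trivial, mul_comm]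
    · intro x
      have hqdeg : (∑ I, x I • mono I).totalDegree ≤ d * κ :=
        le_trans (totalDegree_finset_sum _ _)
          (Finset.sup_le fun I _ => le_trans (totalDegree_smul_le _ _) (hmonodeg I))
      have h0 := hsos _ hqdeg
      have hRHS : pE ((∑ I, x I • mono I) ^ 2)
          = ∑ I, ∑ J, (x I * x J) * pE (mono I * mono J) := by
        rw [sq, Finset.sum_mul_sum, map_sum]
        refine Finset.sum_congr rfl fun I _ => ?_
        rw [map_sum]
        refine Finset.sum_congr rfl fun J _ => ?_
        rw [smul_mul_smul_comm, _root_.map_smul, smul_eq_mul]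
      have hLHS : star x ⬝ᵥ G *ᵥ x = ∑ I, ∑ J, (x I * x J) * pE (mono I * mono J) := by
        simp only [dotProduct, Matrix.mulVec, Pi.star_apply, star_trivial, Finset.mul_sum]
        refine Finset.sum_congr rfl fun I _ => Finset.sum_congr rfl fun J _ => ?_
        rw [hGapp]
        ring
      rw [hLHS, ← hRHS]
      exact h0
  clear_value P A N mono S G
  have hPd : P ^ d = ∑ IJ : (((Fin d × Fin κ) → Fin n) × ((Fin d × Fin κ) → Fin n)),
      C (A IJ.1 IJ.2) * (mono IJ.1 * mono IJ.2) := by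
    have e1 : P ^ d = ∑ g : Fin d → Fin k → Fin n,
        C (∏ t, T (g t)) * ∏ t, ∏ j, X (g t j) := by
      rw [hP]
      conv_lhs => rw [show d = Fintype.card (Fin d) from (Fintype.card_fin d).symm]
      rw [sum_pow_card (ι := Fin d)]
      refine Finset.sum_congr rfl fun g _ => ?_
      rw [Finset.prod_mul_distrib, ← _root_.map_prod]
    have e2 : ∀ IJ : (((Fin d × Fin κ) → Fin n) × ((Fin d × Fin κ) → Fin n)),
        C (∏ t, T ((splitEquiv hk) IJ t)) * ∏ t, ∏ j, X ((splitEquiv hk) IJ t j)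
        = C (A IJ.1 IJ.2) * (mono IJ.1 * mono IJ.2) := by
      intro IJ
      have hcoef : A IJ.1 IJ.2 = ∏ t, T ((splitEquiv hk) IJ t) := by rw [hA]; rfl
      rw [hcoef]
      congr 1
      calc ∏ t, ∏ j, (X ((splitEquiv hk) IJ t j) : MvPolynomial (Fin n) ℝ)
          = ∏ t, ((∏ s, (X (IJ.1 (t, s)) : MvPolynomial (Fin n) ℝ)) *
              ∏ s, (X (IJ.2 (t, s)) : MvPolynomial (Fin n) ℝ)) := by
            refine Finset.prod_congr rfl fun t _ => ?_
            exact prod_joinIdx hk (fun s => IJ.1 (t, s)) (fun s => IJ.2 (t, s))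
              (fun x => (X x : MvPolynomial (Fin n) ℝ))
        _ = (∏ t, ∏ s, (X (IJ.1 (t, s)) : MvPolynomial (Fin n) ℝ)) *
              ∏ t, ∏ s, (X (IJ.2 (t, s)) : MvPolynomial (Fin n) ℝ) :=
            Finset.prod_mul_distrib
        _ = mono IJ.1 * mono IJ.2 := by
            simp only [hmono, Fintype.prod_prod_type]
    calc P ^ d = ∑ g : Fin d → Fin k → Fin n,
          C (∏ t, T (g t)) * ∏ t, ∏ j, X (g t j) := e1
      _ = ∑ IJ : (((Fin d × Fin κ) → Fin n) × ((Fin d × Fin κ) → Fin n)),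
          C (∏ t, T ((splitEquiv hk) IJ t)) * ∏ t, ∏ j, X ((splitEquiv hk) IJ t j) :=
          (Equiv.sum_comp (splitEquiv hk) _).symm
      _ = _ := Finset.sum_congr rfl fun IJ _ => e2 IJ
  have hpEPd : pE (P ^ d) = ∑ I, ∑ J, A I J * pE (mono I * mono J) := by
    rw [hPd, _root_.map_sum, Fintype.sum_prod_type]
    refine Finset.sum_congr rfl fun I _ => Finset.sum_congr rfl fun J _ => ?_
    rw [← smul_eq_C_mul, _root_.map_smul, smul_eq_mul]
  have hwinv : ∀ (π σ : Equiv.Perm (Fin d × Fin κ)) I J,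
      pE (mono (I ∘ π) * mono (J ∘ σ)) = pE (mono I * mono J) := by
    intro π σ I J
    have h1 : mono (I ∘ π) = mono I := by
      simp only [hmono]
      exact Equiv.prod_comp π (fun p => X (I p))
    have h2 : mono (J ∘ σ) = mono J := by
      simp only [hmono]
      exact Equiv.prod_comp σ (fun p => X (J p))
    rw [h1, h2]
  have hsym : ∑ I, ∑ J, N I J * pE (mono I * mono J)
      = ∑ I, ∑ J, A I J * pE (mono I * mono J) := by
    rw [hN]
    exact symAvg_bilinear A (fun I J => pE (mono I * mono J)) hwinv
  have htr : ∑ I, ∑ J, N I J * pE (mono I * mono J)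
      ≤ sNorm N * ∑ I, pE (mono I * mono I) := by
    have h := trace_ineq N G hGpsd
    simpa only [hGapp] using h
  have hdiagsum : ∑ I, pE (mono I * mono I) = α ^ (d * κ) := by
    have h1 : ∑ I : (Fin d × Fin κ) → Fin n, mono I * mono I = S ^ (d * κ) := by
      calc ∑ I : (Fin d × Fin κ) → Fin n, mono I * mono I
          = ∑ I : (Fin d × Fin κ) → Fin n, ∏ p, X (I p) ^ 2 := by
            refine Finset.sum_congr rfl fun I _ => ?_
            rw [hmono]
            rw [← Finset.prod_mul_distrib]
            exact Finset.prod_congr rfl fun p _ => (sq _).symm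
        _ = (∑ x : Fin n, X x ^ 2) ^ Fintype.card (Fin d × Fin κ) :=
            (sum_pow_card (ι := Fin d × Fin κ)
              (f := fun x : Fin n => (X x : MvPolynomial (Fin n) ℝ) ^ 2)).symm
        _ = S ^ (d * κ) := by rw [hcard, hS]
    rw [← map_sum pE (fun I => mono I * mono I) Finset.univ, h1]
    exact hSpow (d * κ) (by rw [hk]; ring_nf; omega)
  have hub : (pE P) ^ d ≤ sNorm N * α ^ (d * κ) := by
    calc (pE P) ^ d ≤ pE (P ^ d) := habs
      _ = ∑ I, ∑ J, A I J * pE (mono I * mono J) := hpEPd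
      _ = ∑ I, ∑ J, N I J * pE (mono I * mono J) := hsym.symm
      _ ≤ sNorm N * ∑ I, pE (mono I * mono I) := htr
      _ = sNorm N * α ^ (d * κ) := by rw [hdiagsum]
  have hAbs : |pE P| ^ d ≤ sNorm N * α ^ (d * κ) := by
    rwa [Even.pow_abs ⟨m, hm⟩]
  have hB : (0:ℝ) ≤ sNorm N := norm_nonneg _
  have hd0 : (d : ℝ) ≠ 0 := Nat.cast_ne_zero.mpr (by omega)
  have key : |pE P| ≤ (sNorm N * α ^ (d * κ)) ^ (1 / (d : ℝ)) := by
    have h1 : |pE P| = ((|pE P| ^ d : ℝ)) ^ (1 / (d : ℝ)) := by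
      rw [← Real.rpow_natCast |pE P| d, ← Real.rpow_mul (abs_nonneg _), mul_one_div,
        div_self hd0, Real.rpow_one]
    rw [h1]
    exact Real.rpow_le_rpow (by positivity) hAbs (by positivity)
  have h2 : (sNorm N * α ^ (d * κ)) ^ (1 / (d : ℝ)) = α ^ κ * sNorm N ^ (1 / (d : ℝ)) := by
    rw [Real.mul_rpow hB (by positivity)]
    have h3 : (α ^ (d * κ) : ℝ) = (α ^ κ) ^ d := by rw [← pow_mul, mul_comm]
    rw [h3, ← Real.rpow_natCast (α ^ κ) d, ← Real.rpow_mul (by positivity), mul_one_div,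
      div_self hd0, Real.rpow_one, mul_comm]
  exact key.trans_eq h2
end
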